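/- arXiv:2209.14990 — 10 statements merged into one kernel-verified Lean document; each statement's English description precedes it below -/
import Mathlib

section
/- Generalized elliptical potential lemma: Let Phi_1, ..., Phi_K be symmetric positive semidefinite d x d matrices, lambda_0 > 0, and V_k = lambda_0 I + sum_{t < k} Phi_t. Then sum_{k=1}^K min{1, tr(V_k^{-1/2} Phi_k V_k^{-1/2})} <= 2 d log(1 + (sum_{k=1}^K tr(Phi_k)) / (d lambda_0)). -/
open Finset Matrix


lemma aux_min_log {x : ℝ} (hx : 0 ≤ x) : min 1 x ≤ 2 * Real.log (1 + x) := by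
  rcases le_or_gt x 1 with h | h
  · rw [min_eq_right h]
    have h1 : (0:ℝ) < 1 + x := by linarith
    have := Real.log_le_sub_one_of_pos (x := (1+x)⁻¹) (by positivity)
    rw [Real.log_inv] at this
    have h2 : (1:ℝ) - (1+x)⁻¹ ≤ Real.log (1+x) := by linarith
    have h3 : (1+x)⁻¹ ≤ 1 - x/2 := by
      rw [inv_le_iff_one_le_mul₀ h1]  -- guess name
      nlinarith
    linarith
  · rw [min_eq_left h.le]
    have : Real.log 2 ≤ Real.log (1+x) := Real.log_le_log (by norm_num) (by linarith)
    have h2 := Real.log_two_gt_d9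
    linarith

lemma aux_one_add_sum {ι : Type*} (s : Finset ι) (f : ι → ℝ) (h : ∀ i ∈ s, 0 ≤ f i) :
    1 + ∑ i ∈ s, f i ≤ ∏ i ∈ s, (1 + f i) := by
  classical
  induction s using Finset.cons_induction with
  | empty => simp
  | cons a s ha ih =>
    rw [Finset.sum_cons, Finset.prod_cons]
    have hfa : 0 ≤ f a := h a (Finset.mem_cons_self a s)
    have hs : ∀ i ∈ s, 0 ≤ f i := fun i hi => h i (Finset.mem_cons_of_mem hi)
    have hsum : 0 ≤ ∑ i ∈ s, f i := Finset.sum_nonneg hs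
    have := ih hs
    nlinarith

lemma aux_trace_eq {d : ℕ} {A : Matrix (Fin d) (Fin d) ℝ} (hA : A.IsHermitian) :
    A.trace = ∑ i, hA.eigenvalues i := by
  simpa using hA.trace_eq_sum_eigenvalues

lemma aux_trace_nonneg {d : ℕ} {A : Matrix (Fin d) (Fin d) ℝ} (hA : A.PosSemidef) :
    0 ≤ A.trace := by
  rw [aux_trace_eq hA.1]
  exact Finset.sum_nonneg fun i _ => hA.eigenvalues_nonneg i

lemma aux_det_one_add {d : ℕ} {M : Matrix (Fin d) (Fin d) ℝ} (hM : M.PosSemidef) :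
    1 + M.trace ≤ (1 + M).det := by
  set U : Matrix (Fin d) (Fin d) ℝ := (hM.1.eigenvectorUnitary : Matrix (Fin d) (Fin d) ℝ)
  have hU : U * star U = 1 := Matrix.mem_unitaryGroup_iff.mp hM.1.eigenvectorUnitary.2
  have h1 : (1 : Matrix (Fin d) (Fin d) ℝ) + M
      = U * (1 + diagonal (RCLike.ofReal ∘ hM.1.eigenvalues)) * star U := by
    rw [mul_add, add_mul, mul_one, hU]
    congr 1
    exact hM.1.spectral_theorem
  have hdetU : U.det * (star U).det = 1 := by
    rw [← Matrix.det_mul, hU, Matrix.det_one]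
  have h2 : (1 + M).det = ∏ i, (1 + hM.1.eigenvalues i) := by
    rw [h1, Matrix.det_mul, Matrix.det_mul, mul_comm, ← mul_assoc, mul_comm (star U).det,
      hdetU, one_mul]
    rw [show (1 : Matrix (Fin d) (Fin d) ℝ) = diagonal (fun _ => 1) from (Matrix.diagonal_one).symm,
      Matrix.diagonal_add, Matrix.det_diagonal]
    simp
  rw [h2, aux_trace_eq hM.1]
  exact aux_one_add_sum Finset.univ _ (fun i _ => hM.eigenvalues_nonneg i)

lemma aux_log_det_le {d : ℕ} (hd : 0 < d) {A : Matrix (Fin d) (Fin d) ℝ} (hA : A.PosDef) :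
    Real.log A.det ≤ d * Real.log (A.trace / d) := by
  have hμ : ∀ i, 0 < hA.1.eigenvalues i := hA.eigenvalues_pos
  have hdR : (0:ℝ) < d := Nat.cast_pos.mpr hd
  have hgm := Real.geom_mean_le_arith_mean_weighted Finset.univ (fun _ => 1/(d:ℝ))
    hA.1.eigenvalues (fun i _ => by positivity) (by simp [Finset.card_univ]; field_simp)
    (fun i _ => (hμ i).le)
  have hlog : Real.log (∏ i, hA.1.eigenvalues i ^ (1/(d:ℝ)))
      ≤ Real.log (∑ i, 1/(d:ℝ) * hA.1.eigenvalues i) := by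
    apply Real.log_le_log _ hgm
    exact Finset.prod_pos fun i _ => Real.rpow_pos_of_pos (hμ i) _
  rw [Real.log_prod (fun i _ => (Real.rpow_pos_of_pos (hμ i) _).ne')] at hlog
  simp_rw [Real.log_rpow (hμ _)] at hlog
  rw [← Finset.mul_sum] at hlog
  have hsum : (∑ i, 1/(d:ℝ) * hA.1.eigenvalues i) = A.trace / d := by
    rw [← Finset.mul_sum, aux_trace_eq hA.1]
    ring
  rw [hsum] at hlog
  have hdet : Real.log A.det = ∑ i, Real.log (hA.1.eigenvalues i) := by
    rw [hA.1.det_eq_prod_eigenvalues]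
    simp only [RCLike.ofReal_real_eq_id, id_eq]
    rw [Real.log_prod (fun i _ => (hμ i).ne')]
  rw [hdet]
  calc ∑ i, Real.log (hA.1.eigenvalues i)
      = d * (1/(d:ℝ) * ∑ i, Real.log (hA.1.eigenvalues i)) := by field_simp
    _ ≤ d * Real.log (A.trace / d) := by
        apply mul_le_mul_of_nonneg_left hlog hdR.le

/-- Generalized elliptical potential lemma: for symmetric PSD matrices
`Φ₁, …, Φ_K`, `λ₀ > 0`, and `V_k = λ₀ I + ∑_{t<k} Φ_t`, with `W_k` the PSD square root
of `V_k`, one has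
`∑_{k=1}^K min{1, tr(W_k⁻¹ Φ_k W_k⁻¹)} ≤ 2 d log(1 + (∑_k tr Φ_k)/(d λ₀))`. -/
theorem generalized_elliptical_potential
    (d K : ℕ) (hd : 0 < d) (lam0 : ℝ) (hlam : 0 < lam0)
    (Φ : ℕ → Matrix (Fin d) (Fin d) ℝ)
    (hΦ : ∀ k ∈ Finset.Icc 1 K, (Φ k).PosSemidef)
    (V W : ℕ → Matrix (Fin d) (Fin d) ℝ)
    (hV : ∀ k, V k = lam0 • (1 : Matrix (Fin d) (Fin d) ℝ) + ∑ t ∈ Finset.Ico 1 k, Φ t)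
    (hW : ∀ k ∈ Finset.Icc 1 K, (W k).PosSemidef ∧ W k * W k = V k) :
    ∑ k ∈ Finset.Icc 1 K, min 1 (((W k)⁻¹ * Φ k * (W k)⁻¹).trace)
      ≤ 2 * d * Real.log (1 + (∑ k ∈ Finset.Icc 1 K, (Φ k).trace) / (d * lam0)) := by
  have hdR : (0:ℝ) < d := Nat.cast_pos.mpr hd
  -- positive definiteness of V k for k ≤ K+1
  have hVpd : ∀ k ≤ K + 1, (V k).PosDef := by
    intro k hk
    rw [hV k]
    have h1 : (lam0 • (1 : Matrix (Fin d) (Fin d) ℝ)).PosDef := by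
      rw [Matrix.smul_one_eq_diagonal]
      exact Matrix.posDef_diagonal_iff.mpr fun _ => hlam
    refine h1.add_posSemidef ?_
    refine Finset.sum_induction _ _ (fun a b ha hb => ha.add hb) Matrix.PosSemidef.zero ?_
    intro t ht
    rw [Finset.mem_Ico] at ht
    exact hΦ t (Finset.mem_Icc.mpr ⟨ht.1, by omega⟩)
  set L : ℕ → ℝ := fun k => Real.log (V k).det with hL
  -- key per-step inequality
  have hstep : ∀ k ∈ Finset.Icc 1 K,
      min 1 (((W k)⁻¹ * Φ k * (W k)⁻¹).trace) ≤ 2 * (L (k+1) - L k) := by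
    intro k hk
    rw [Finset.mem_Icc] at hk
    obtain ⟨hWpsd, hWW⟩ := hW k (Finset.mem_Icc.mpr hk)
    have hΦk := hΦ k (Finset.mem_Icc.mpr hk)
    have hVk : (V k).PosDef := hVpd k (by omega)
    have hVk1 : (V (k+1)).PosDef := hVpd (k+1) (by omega)
    have hdetW2 : (W k).det * (W k).det = (V k).det := by rw [← Matrix.det_mul, hWW]
    have hdetW : IsUnit (W k).det := by
      refine isUnit_iff_ne_zero.mpr fun h => ?_
      have := hVk.det_pos
      rw [← hdetW2, h, mul_zero] at this
      exact lt_irrefl _ this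
    set M := (W k)⁻¹ * Φ k * (W k)⁻¹ with hM
    have hWinv : (W k)⁻¹ᴴ = (W k)⁻¹ := by
      rw [Matrix.conjTranspose_nonsing_inv, hWpsd.1.eq]
    have hMpsd : M.PosSemidef := by
      have := hΦk.conjTranspose_mul_mul_same ((W k)⁻¹)
      rwa [hWinv] at this
    have htr : 0 ≤ M.trace := aux_trace_nonneg hMpsd
    -- factorization
    have hVsucc : V (k+1) = V k + Φ k := by
      rw [hV (k+1), hV k, Finset.sum_Ico_succ_top hk.1, add_assoc]
    have hmid : W k * M * W k = Φ k := by
      calc W k * ((W k)⁻¹ * Φ k * (W k)⁻¹) * W k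
          = W k * (W k)⁻¹ * Φ k * ((W k)⁻¹ * W k) := by
            simp only [Matrix.mul_assoc]
        _ = Φ k := by
            rw [Matrix.mul_nonsing_inv _ hdetW, Matrix.nonsing_inv_mul _ hdetW, one_mul, mul_one]
    have hfact : V (k+1) = W k * (1 + M) * W k := by
      rw [mul_add, add_mul, mul_one, hWW, hmid, hVsucc]
    have hdet : (V (k+1)).det = (1 + M).det * (V k).det := by
      rw [hfact, Matrix.det_mul, Matrix.det_mul, ← hdetW2]
      ring
    have h1M : (0:ℝ) < 1 + M.trace := by linarith
    have hlog1 : Real.log (1 + M.trace) ≤ Real.log ((1+M).det) :=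
      Real.log_le_log h1M (aux_det_one_add hMpsd)
    have hlog2 : Real.log ((1+M).det) = L (k+1) - L k := by
      have hdetM : (1+M).det = (V (k+1)).det / (V k).det := by
        rw [hdet, mul_div_cancel_right₀ _ hVk.det_pos.ne']
      rw [hdetM, Real.log_div hVk1.det_pos.ne' hVk.det_pos.ne']
    calc min 1 M.trace ≤ 2 * Real.log (1 + M.trace) := aux_min_log htr
      _ ≤ 2 * (L (k+1) - L k) := by rw [← hlog2]; linarith
  -- sum and telescope
  have hsum : ∑ k ∈ Finset.Icc 1 K, min 1 (((W k)⁻¹ * Φ k * (W k)⁻¹).trace)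
      ≤ 2 * (L (K+1) - L 1) := by
    calc ∑ k ∈ Finset.Icc 1 K, min 1 (((W k)⁻¹ * Φ k * (W k)⁻¹).trace)
        ≤ ∑ k ∈ Finset.Icc 1 K, 2 * (L (k+1) - L k) := Finset.sum_le_sum hstep
      _ = 2 * ∑ k ∈ Finset.Icc 1 K, (L (k+1) - L k) := by rw [Finset.mul_sum]
      _ = 2 * (L (K+1) - L 1) := by
          congr 1
          rw [← Finset.Ico_add_one_right_eq_Icc, Finset.sum_Ico_eq_sum_range]
          have h : ∑ i ∈ Finset.range (K + 1 - 1), (L (1 + i + 1) - L (1 + i))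
              = L (1 + (K + 1 - 1)) - L (1 + 0) := Finset.sum_range_sub (fun j => L (1 + j)) _
          have e1 : 1 + (K + 1 - 1) = K + 1 := by omega
          have e2 : 1 + 0 = 1 := rfl
          rw [h, e1, e2]
  -- final bounds
  set S := ∑ k ∈ Finset.Icc 1 K, (Φ k).trace with hS
  have hSnn : 0 ≤ S := Finset.sum_nonneg fun k hk => aux_trace_nonneg (hΦ k hk)
  have hL1 : L 1 = d * Real.log lam0 := by
    have : V 1 = lam0 • (1 : Matrix (Fin d) (Fin d) ℝ) := by
      rw [hV 1]; simp
    rw [hL]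
    simp only [this, Matrix.det_smul, Matrix.det_one, mul_one, Fintype.card_fin]
    rw [Real.log_pow]
  have hTr : (V (K+1)).trace = d * lam0 + S := by
    rw [hV (K+1), Matrix.trace_add, Matrix.trace_smul, Matrix.trace_one, Matrix.trace_sum,
      Finset.Ico_add_one_right_eq_Icc, hS]
    simp [Finset.card_univ, mul_comm]
  have hT : (0:ℝ) < d * lam0 + S := by positivity
  have hLK : L (K+1) ≤ d * Real.log ((d * lam0 + S) / d) := by
    rw [hL, ← hTr]
    exact aux_log_det_le hd (hVpd (K+1) le_rfl)
  have hfin : (d:ℝ) * Real.log ((d * lam0 + S) / d) - d * Real.log lam0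
      = d * Real.log (1 + S / (d * lam0)) := by
    rw [← mul_sub]
    congr 1
    rw [← Real.log_div (by positivity) hlam.ne']
    congr 1
    field_simp
  calc ∑ k ∈ Finset.Icc 1 K, min 1 (((W k)⁻¹ * Φ k * (W k)⁻¹).trace)
      ≤ 2 * (L (K+1) - L 1) := hsum
    _ ≤ 2 * (d * Real.log ((d * lam0 + S) / d) - d * Real.log lam0) := by
        rw [hL1]; linarith
    _ = 2 * d * Real.log (1 + S / (d * lam0)) := by rw [hfin]; ring
end

section
/- Let p, q in R^U be entrywise nonnegative vectors over a finite index set U, with ||p||_inf-weighted mass bounds M_p := max over subsets T of U and probability weights pi of sum_{t in T} pi(t) p(t), and similarly M_q. If M_p <= 1 and M_q <= 1, then the mixed (1,2)-norm of p - q satisfies ||p - q||_{1,2}^2 <= 2 (M_p + M_q) || sqrt(p) - sqrt(q) ||_2^2 <= 4 || sqrt(p) - sqrt(q) ||_2^2, where sqrt is applied entrywise. -/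
open Finset

/-- for entrywise nonnegative `p, q ∈ ℝ^U` whose group sums (groups indexed
by `a ∈ A` via `act`) are bounded by `M_p ≤ 1` and `M_q ≤ 1` respectively,
`‖p - q‖_{1,2}² ≤ 2 (M_p + M_q) ‖√p - √q‖₂² ≤ 4 ‖√p - √q‖₂²`. -/
theorem mixed_norm_sq_sub_le_hellinger_bound
    {U A : Type*} [Fintype U] [Fintype A] [DecidableEq A] (act : U → A)
    (p q : U → ℝ) (hp : ∀ u, 0 ≤ p u) (hq : ∀ u, 0 ≤ q u)
    (Mp Mq : ℝ)
    (hMp : ∀ a, ∑ u ∈ Finset.univ.filter (fun u => act u = a), p u ≤ Mp)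
    (hMq : ∀ a, ∑ u ∈ Finset.univ.filter (fun u => act u = a), q u ≤ Mq)
    (hMp1 : Mp ≤ 1) (hMq1 : Mq ≤ 1) :
    (∑ a : A, (∑ u ∈ Finset.univ.filter (fun u => act u = a), |p u - q u|) ^ 2
        ≤ 2 * (Mp + Mq) * ∑ u, (Real.sqrt (p u) - Real.sqrt (q u)) ^ 2) ∧
      (2 * (Mp + Mq) * ∑ u, (Real.sqrt (p u) - Real.sqrt (q u)) ^ 2
        ≤ 4 * ∑ u, (Real.sqrt (p u) - Real.sqrt (q u)) ^ 2) := by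
  have hsq : 0 ≤ ∑ u, (Real.sqrt (p u) - Real.sqrt (q u)) ^ 2 :=
    Finset.sum_nonneg fun u _ => sq_nonneg _
  constructor
  · have key : ∀ a : A,
        (∑ u ∈ Finset.univ.filter (fun u => act u = a), |p u - q u|) ^ 2
          ≤ 2 * (Mp + Mq) *
            ∑ u ∈ Finset.univ.filter (fun u => act u = a),
              (Real.sqrt (p u) - Real.sqrt (q u)) ^ 2 := by
      intro a
      set s := Finset.univ.filter (fun u => act u = a)
      have habs : ∀ u, |p u - q u|
          = |Real.sqrt (p u) - Real.sqrt (q u)| * (Real.sqrt (p u) + Real.sqrt (q u)) := by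
        intro u
        have h1 : p u - q u = (Real.sqrt (p u) - Real.sqrt (q u)) *
            (Real.sqrt (p u) + Real.sqrt (q u)) := by
          have := Real.sq_sqrt (hp u)
          have := Real.sq_sqrt (hq u)
          nlinarith
        rw [h1, abs_mul, abs_of_nonneg (show (0:ℝ) ≤ Real.sqrt (p u) + Real.sqrt (q u) by positivity)]
      have hcs := Finset.sum_mul_sq_le_sq_mul_sq s
        (fun u => |Real.sqrt (p u) - Real.sqrt (q u)|)
        (fun u => Real.sqrt (p u) + Real.sqrt (q u))
      simp only [sq_abs] at hcs
      calc (∑ u ∈ s, |p u - q u|) ^ 2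
          = (∑ u ∈ s, |Real.sqrt (p u) - Real.sqrt (q u)| *
              (Real.sqrt (p u) + Real.sqrt (q u))) ^ 2 := by
            congr 1; exact Finset.sum_congr rfl fun u _ => habs u
        _ ≤ (∑ u ∈ s, (Real.sqrt (p u) - Real.sqrt (q u)) ^ 2) *
            ∑ u ∈ s, (Real.sqrt (p u) + Real.sqrt (q u)) ^ 2 := hcs
        _ ≤ (∑ u ∈ s, (Real.sqrt (p u) - Real.sqrt (q u)) ^ 2) * (2 * (Mp + Mq)) := by
            apply mul_le_mul_of_nonneg_left _ (Finset.sum_nonneg fun u _ => sq_nonneg _)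
            have h2 : ∑ u ∈ s, (Real.sqrt (p u) + Real.sqrt (q u)) ^ 2
                ≤ ∑ u ∈ s, (2 * p u + 2 * q u) := by
              apply Finset.sum_le_sum
              intro u _
              have hpu := Real.sq_sqrt (hp u)
              have hqu := Real.sq_sqrt (hq u)
              nlinarith [sq_nonneg (Real.sqrt (p u) - Real.sqrt (q u))]
            calc ∑ u ∈ s, (Real.sqrt (p u) + Real.sqrt (q u)) ^ 2
                ≤ ∑ u ∈ s, (2 * p u + 2 * q u) := h2
              _ = 2 * ∑ u ∈ s, p u + 2 * ∑ u ∈ s, q u := by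
                  rw [Finset.sum_add_distrib, ← Finset.mul_sum, ← Finset.mul_sum]
              _ ≤ 2 * Mp + 2 * Mq := by
                  have := hMp a; have := hMq a; linarith
              _ = 2 * (Mp + Mq) := by ring
        _ = 2 * (Mp + Mq) * ∑ u ∈ s, (Real.sqrt (p u) - Real.sqrt (q u)) ^ 2 := by ring
    calc ∑ a : A, (∑ u ∈ Finset.univ.filter (fun u => act u = a), |p u - q u|) ^ 2
        ≤ ∑ a : A, 2 * (Mp + Mq) *
            ∑ u ∈ Finset.univ.filter (fun u => act u = a),
              (Real.sqrt (p u) - Real.sqrt (q u)) ^ 2 :=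
          Finset.sum_le_sum fun a _ => key a
      _ = 2 * (Mp + Mq) * ∑ u, (Real.sqrt (p u) - Real.sqrt (q u)) ^ 2 := by
          rw [← Finset.mul_sum]
          congr 1
          exact Finset.sum_fiberwise _ _ _
  · apply mul_le_mul_of_nonneg_right _ hsq
    linarith
end

section
/- For entrywise nonnegative vectors p, q in R^n, ( sum_i |p_i - q_i| )^2 <= 2 ( sum_i (p_i + q_i) ) * ( sum_i ( sqrt(p_i) - sqrt(q_i) )^2 ). -/
open Finset

/-- for entrywise nonnegative vectors `p, q ∈ ℝⁿ`,
`(∑ |pᵢ - qᵢ|)² ≤ 2 (∑ (pᵢ + qᵢ)) (∑ (√pᵢ - √qᵢ)²)`. -/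
theorem sq_sum_abs_sub_le_two_mul_sum_add_mul_sum_sq_sqrt_sub
    (n : ℕ) (p q : Fin n → ℝ) (hp : ∀ i, 0 ≤ p i) (hq : ∀ i, 0 ≤ q i) :
    (∑ i, |p i - q i|) ^ 2 ≤
      2 * (∑ i, (p i + q i)) * (∑ i, (Real.sqrt (p i) - Real.sqrt (q i)) ^ 2) := by
  have key : ∀ i, |p i - q i| = (Real.sqrt (p i) + Real.sqrt (q i)) *
      |Real.sqrt (p i) - Real.sqrt (q i)| := by
    intro i
    rw [← abs_of_nonneg (add_nonneg (Real.sqrt_nonneg (p i)) (Real.sqrt_nonneg (q i))),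
      ← abs_mul]
    congr 1
    have h1 := Real.sq_sqrt (hp i)
    have h2 := Real.sq_sqrt (hq i)
    nlinarith [h1, h2]
  have cs := Finset.sum_mul_sq_le_sq_mul_sq Finset.univ
    (fun i => Real.sqrt (p i) + Real.sqrt (q i))
    (fun i => |Real.sqrt (p i) - Real.sqrt (q i)|)
  simp only [sq_abs] at cs
  calc (∑ i, |p i - q i|) ^ 2
      = (∑ i, (Real.sqrt (p i) + Real.sqrt (q i)) *
          |Real.sqrt (p i) - Real.sqrt (q i)|) ^ 2 := by
        congr 1; exact Finset.sum_congr rfl fun i _ => key i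
    _ ≤ (∑ i, (Real.sqrt (p i) + Real.sqrt (q i)) ^ 2) *
          ∑ i, (Real.sqrt (p i) - Real.sqrt (q i)) ^ 2 := cs
    _ ≤ (∑ i, 2 * (p i + q i)) *
          ∑ i, (Real.sqrt (p i) - Real.sqrt (q i)) ^ 2 := by
        apply mul_le_mul_of_nonneg_right
        · apply Finset.sum_le_sum
          intro i _
          have h1 := Real.sq_sqrt (hp i)
          have h2 := Real.sq_sqrt (hq i)
          nlinarith [sq_nonneg (Real.sqrt (p i) - Real.sqrt (q i))]
        · exact Finset.sum_nonneg fun i _ => sq_nonneg _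
    _ = 2 * (∑ i, (p i + q i)) * ∑ i, (Real.sqrt (p i) - Real.sqrt (q i)) ^ 2 := by
        rw [← Finset.mul_sum]
end

section
/- Let mu be a finitely supported probability distribution over an index set Theta, let {x_i}_{i in I} be vectors in R^n whose span has dimension at most d, let {q_theta}_{theta in Theta} be probability distributions over I, and let f_theta(x) = max over r in a finite set R of sum_{j=1}^J |<x, y_{theta,j,r}>| for a bounded family of vectors y_{theta,j,r} in R^n. Then E_{theta ~ mu} E_{i ~ q_theta} [ f_theta(x_i) ] <= sqrt( d * E_{theta ~ mu} E_{theta' ~ mu} E_{i ~ q_{theta'}} [ f_theta(x_i)^2 ] ). -/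
open Finset Matrix
open scoped RealInnerProductSpace

/-- The function `f_θ(x) = max_{r ∈ R} ∑_{j=1}^J |⟨x, y_{θ,j,r}⟩|`. -/
noncomputable def maxAbsSumInner {R : Type*} [Fintype R] [Nonempty R] {n J : ℕ}
    (y : Fin J → R → Fin n → ℝ) (v : Fin n → ℝ) : ℝ :=
  Finset.univ.sup' Finset.univ_nonempty (fun r => ∑ j, |v ⬝ᵥ y j r|)

/-- Decoupling argument: for a finitely supported distribution `μ` on `Θ`,
vectors `x_i` spanning a subspace of dimension `≤ d`, distributions `q_θ` on `I`, and
`f_θ(x) = max_r ∑_j |⟨x, y_{θ,j,r}⟩|`,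
`E_{θ∼μ} E_{i∼q_θ}[f_θ(x_i)] ≤ √(d · E_{θ∼μ} E_{θ'∼μ} E_{i∼q_{θ'}}[f_θ(x_i)²])`. -/
theorem decoupling_argument
    {Θ I R : Type*} [Fintype Θ] [Fintype I] [Fintype R] [Nonempty R]
    (n d J : ℕ)
    (μ : Θ → ℝ) (hμ0 : ∀ θ, 0 ≤ μ θ) (hμ1 : ∑ θ, μ θ = 1)
    (q : Θ → I → ℝ) (hq0 : ∀ θ i, 0 ≤ q θ i) (hq1 : ∀ θ, ∑ i, q θ i = 1)
    (x : I → Fin n → ℝ)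
    (hdim : Module.finrank ℝ (Submodule.span ℝ (Set.range x)) ≤ d)
    (y : Θ → Fin J → R → Fin n → ℝ) :
    ∑ θ, μ θ * ∑ i, q θ i * maxAbsSumInner (y θ) (x i)
      ≤ Real.sqrt (d * ∑ θ, μ θ * ∑ θ', μ θ' * ∑ i, q θ' i *
          (maxAbsSumInner (y θ) (x i)) ^ 2) := by
  classical
  set f : Θ → I → ℝ := fun θ i => maxAbsSumInner (y θ) (x i) with hf
  have hf0 : ∀ θ i, 0 ≤ f θ i := by
    intro θ i
    obtain ⟨r, hr⟩ := (Finset.univ_nonempty : (Finset.univ : Finset R).Nonempty)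
    exact le_trans (Finset.sum_nonneg fun j _ => abs_nonneg _)
      (Finset.le_sup' (fun r => ∑ j, |x i ⬝ᵥ y θ j r|) hr)
  -- embed into Euclidean space
  set X : I → EuclideanSpace ℝ (Fin n) :=
    fun i => (WithLp.equiv 2 (Fin n → ℝ)).symm (x i) with hX
  set Y : Θ → Fin J → R → EuclideanSpace ℝ (Fin n) :=
    fun θ j r => (WithLp.equiv 2 (Fin n → ℝ)).symm (y θ j r) with hY
  have hinner : ∀ (u v : Fin n → ℝ),
      ⟪((WithLp.equiv 2 (Fin n → ℝ)).symm u : EuclideanSpace ℝ (Fin n)),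
        (WithLp.equiv 2 (Fin n → ℝ)).symm v⟫ = u ⬝ᵥ v := by
    intro u v
    simp [PiLp.inner_apply, RCLike.inner_apply, dotProduct, mul_comm]
  -- subgradient vectors z θ i
  have hz : ∀ θ i, ∃ z : EuclideanSpace ℝ (Fin n),
      ⟪X i, z⟫ = f θ i ∧ ∀ i', |⟪X i', z⟫| ≤ f θ i' := by
    intro θ i
    obtain ⟨r, -, hr⟩ := Finset.exists_mem_eq_sup'
      (Finset.univ_nonempty : (Finset.univ : Finset R).Nonempty)
      (fun r => ∑ j, |x i ⬝ᵥ y θ j r|)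
    refine ⟨∑ j, (if x i ⬝ᵥ y θ j r < 0 then (-1 : ℝ) else 1) • Y θ j r, ?_, ?_⟩
    · rw [inner_sum]
      simp only [real_inner_smul_right, hY, hX, hinner]
      rw [hf]
      simp only [maxAbsSumInner]
      rw [hr]
      refine Finset.sum_congr rfl fun j _ => ?_
      split_ifs with h
      · rw [abs_of_neg h]; ring
      · rw [abs_of_nonneg (not_lt.1 h)]; ring
    · intro i'
      rw [inner_sum]
      simp only [real_inner_smul_right, hY, hX, hinner]
      calc |∑ j, (if x i ⬝ᵥ y θ j r < 0 then (-1 : ℝ) else 1) * (x i' ⬝ᵥ y θ j r)|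
          ≤ ∑ j, |(if x i ⬝ᵥ y θ j r < 0 then (-1 : ℝ) else 1) * (x i' ⬝ᵥ y θ j r)| :=
            Finset.abs_sum_le_sum_abs _ _
        _ = ∑ j, |x i' ⬝ᵥ y θ j r| := by
            refine Finset.sum_congr rfl fun j _ => ?_
            rw [abs_mul]
            split_ifs <;> simp
        _ ≤ f θ i' :=
            Finset.le_sup' (fun r => ∑ j, |x i' ⬝ᵥ y θ j r|) (Finset.mem_univ r)
  choose z hz1 hz2 using hz
  -- the second moment operator
  set ν : I → ℝ := fun i => ∑ θ, μ θ * q θ i with hν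
  have hν0 : ∀ i, 0 ≤ ν i := fun i =>
    Finset.sum_nonneg fun θ _ => mul_nonneg (hμ0 θ) (hq0 θ i)
  set T : EuclideanSpace ℝ (Fin n) →ₗ[ℝ] EuclideanSpace ℝ (Fin n) :=
    { toFun := fun v => ∑ i, (ν i * ⟪X i, v⟫) • X i
      map_add' := fun u v => by
        simp only [inner_add_right, mul_add, add_smul, Finset.sum_add_distrib]
      map_smul' := fun c v => by
        simp only [real_inner_smul_right, RingHom.id_apply, Finset.smul_sum, smul_smul]
        exact Finset.sum_congr rfl fun i _ => by rw [mul_left_comm] } with hT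
  have hTapp : ∀ v, T v = ∑ i, (ν i * ⟪X i, v⟫) • X i := fun v => rfl
  have hTinner : ∀ v w : EuclideanSpace ℝ (Fin n),
      ⟪v, T w⟫ = ∑ i, ν i * (⟪X i, v⟫ * ⟪X i, w⟫) := by
    intro v w
    rw [hTapp, inner_sum]
    refine Finset.sum_congr rfl fun i _ => ?_
    rw [real_inner_smul_right, real_inner_comm v (X i)]
    ring
  have hTsym : T.IsSymmetric := by
    intro u v
    rw [real_inner_comm v (T u), hTinner, hTinner]
    exact Finset.sum_congr rfl fun i _ => by ring
  have hn : Module.finrank ℝ (EuclideanSpace ℝ (Fin n)) = n := finrank_euclideanSpace_fin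
  set e := hTsym.eigenvectorBasis hn with he
  set lam := hTsym.eigenvalues hn with hlam
  have heig : ∀ k, T (e k) = lam k • e k := fun k => hTsym.apply_eigenvectorBasis hn k
  have hlam_eq : ∀ k, lam k = ∑ i, ν i * ⟪X i, e k⟫ ^ 2 := by
    intro k
    have h1 : ⟪e k, T (e k)⟫ = lam k := by
      rw [heig k, real_inner_smul_right, real_inner_self_eq_norm_sq, e.orthonormal.1 k]
      norm_num
    rw [← h1, hTinner]
    exact Finset.sum_congr rfl fun i _ => by ring
  have hlam0 : ∀ k, 0 ≤ lam k := by
    intro k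
    rw [hlam_eq]
    exact Finset.sum_nonneg fun i _ => mul_nonneg (hν0 i) (sq_nonneg _)
  have hker : ∀ k, lam k = 0 → ∀ i, 0 < ν i → ⟪X i, e k⟫ = 0 := by
    intro k hk i hi
    have h0 : ∀ i ∈ Finset.univ, 0 ≤ ν i * ⟪X i, e k⟫ ^ 2 :=
      fun i _ => mul_nonneg (hν0 i) (sq_nonneg _)
    have := (Finset.sum_eq_zero_iff_of_nonneg h0).1 ((hlam_eq k).symm.trans hk) i
      (Finset.mem_univ i)
    have h2 : ⟪X i, e k⟫ ^ 2 = 0 := by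
      rcases mul_eq_zero.1 this with h | h
      · exact absurd h (ne_of_gt hi)
      · exact h
    exact sq_eq_zero_iff.1 h2
  -- the set of nonzero eigenvalues has cardinality ≤ d
  set S : Finset (Fin n) := Finset.univ.filter (fun k => lam k ≠ 0) with hS
  have hSd : S.card ≤ d := by
    have hmem : ∀ k ∈ S, e k ∈ Submodule.span ℝ (Set.range X) := by
      intro k hk
      have hk' : lam k ≠ 0 := (Finset.mem_filter.1 hk).2
      have hek : e k = (lam k)⁻¹ • T (e k) := by
        rw [heig k, smul_smul, inv_mul_cancel₀ hk', one_smul]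
      rw [hek, hTapp]
      exact Submodule.smul_mem _ _ (Submodule.sum_mem _ fun i _ =>
        Submodule.smul_mem _ _ (Submodule.subset_span ⟨i, rfl⟩))
    have hli : LinearIndependent ℝ (fun k : S => e ↑k) :=
      e.orthonormal.linearIndependent.comp _ Subtype.coe_injective
    have h2 := finrank_span_eq_card hli
    have h3 : Submodule.span ℝ (Set.range fun k : S => e ↑k)
        ≤ Submodule.span ℝ (Set.range X) := by
      rw [Submodule.span_le]
      rintro _ ⟨k, rfl⟩
      exact hmem k k.2
    have h4 := Submodule.finrank_mono h3
    have h5 : Module.finrank ℝ (Submodule.span ℝ (Set.range X)) ≤ d := by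
      have hXr : Set.range X = ((WithLp.linearEquiv 2 ℝ (Fin n → ℝ)).symm :
          (Fin n → ℝ) →ₗ[ℝ] EuclideanSpace ℝ (Fin n)) '' Set.range x := by
        rw [← Set.range_comp]; rfl
      rw [hXr, Submodule.span_image, LinearEquiv.finrank_map_eq]
      exact hdim
    calc S.card = Fintype.card S := (Fintype.card_coe S).symm
      _ = Module.finrank ℝ (Submodule.span ℝ (Set.range fun k : S => e ↑k)) := h2.symm
      _ ≤ Module.finrank ℝ (Submodule.span ℝ (Set.range X)) := h4
      _ ≤ d := h5
  -- abbreviations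
  set w : Θ × I → ℝ := fun p => μ p.1 * q p.1 p.2 with hw
  have hw0 : ∀ p, 0 ≤ w p := fun p => mul_nonneg (hμ0 p.1) (hq0 p.1 p.2)
  set a : I → Fin n → ℝ := fun i k => ⟪X i, e k⟫ with ha
  set b : Θ → I → Fin n → ℝ := fun θ i k => ⟪e k, z θ i⟫ with hb
  -- Parseval expansion of f
  have key : ∀ θ i, f θ i = ∑ k, a i k * b θ i k := by
    intro θ i
    rw [← hz1 θ i, ← e.sum_inner_mul_inner (X i) (z θ i)]
  -- nonzero weights force positive ν
  have hwν : ∀ p : Θ × I, w p ≠ 0 → 0 < ν p.2 := by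
    intro p hp
    have h1 : 0 < w p := lt_of_le_of_ne (hw0 p) (Ne.symm hp)
    have h2 : w p ≤ ν p.2 := by
      rw [hν]
      exact Finset.single_le_sum (f := fun θ => μ θ * q θ p.2)
        (fun θ _ => mul_nonneg (hμ0 θ) (hq0 θ p.2)) (Finset.mem_univ p.1)
    exact lt_of_lt_of_le h1 h2
  -- left-hand side as a single sum restricted to S
  have hL : ∑ θ, μ θ * ∑ i, q θ i * f θ i
      = ∑ c ∈ S ×ˢ (Finset.univ : Finset (Θ × I)),
          w c.2 * (a c.2.2 c.1 * b c.2.1 c.2.2 c.1) := by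
    rw [Finset.sum_product]
    have step1 : ∑ θ, μ θ * ∑ i, q θ i * f θ i
        = ∑ p : Θ × I, ∑ k, w p * (a p.2 k * b p.1 p.2 k) := by
      rw [Fintype.sum_prod_type]
      refine Finset.sum_congr rfl fun θ _ => ?_
      rw [Finset.mul_sum]
      refine Finset.sum_congr rfl fun i _ => ?_
      rw [key θ i, Finset.mul_sum, Finset.mul_sum]
      exact Finset.sum_congr rfl fun k _ => by rw [hw]; ring
    rw [step1, Finset.sum_comm]
    rw [← Finset.sum_subset (Finset.subset_univ S)]
    intro k _ hk
    have hk0 : lam k = 0 := by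
      by_contra h
      exact hk (Finset.mem_filter.2 ⟨Finset.mem_univ k, h⟩)
    refine Finset.sum_eq_zero fun p _ => ?_
    by_cases hp : w p = 0
    · rw [hp, zero_mul]
    · have : a p.2 k = 0 := hker k hk0 p.2 (hwν p hp)
      rw [this, zero_mul, mul_zero]
  -- ⟪z, T z⟫ in the eigenbasis
  have hzT : ∀ θ i, ∑ k, lam k * b θ i k ^ 2 = ∑ i', ν i' * ⟪X i', z θ i⟫ ^ 2 := by
    intro θ i
    have h1 : ⟪z θ i, T (z θ i)⟫ = ∑ i', ν i' * ⟪X i', z θ i⟫ ^ 2 := by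
      rw [hTinner]
      exact Finset.sum_congr rfl fun i' _ => by ring
    rw [← h1, ← e.sum_inner_mul_inner (z θ i) (T (z θ i))]
    refine Finset.sum_congr rfl fun k _ => ?_
    have h2 : ⟪e k, T (z θ i)⟫ = lam k * ⟪e k, z θ i⟫ := by
      rw [← hTsym (e k) (z θ i), heig k, real_inner_smul_left]
    rw [h2, real_inner_comm (e k) (z θ i)]
    simp only [hb]
    ring
  -- Cauchy-Schwarz setup
  set s : Finset (Fin n × (Θ × I)) := S ×ˢ Finset.univ with hs
  set F : Fin n × (Θ × I) → ℝ := fun c => Real.sqrt (w c.2 / lam c.1) * a c.2.2 c.1 with hF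
  set G : Fin n × (Θ × I) → ℝ := fun c => Real.sqrt (w c.2 * lam c.1) * b c.2.1 c.2.2 c.1 with hG
  have hlamS : ∀ k ∈ S, 0 < lam k := fun k hk =>
    lt_of_le_of_ne (hlam0 k) (Ne.symm (Finset.mem_filter.1 hk).2)
  have hFG : ∀ c ∈ s, w c.2 * (a c.2.2 c.1 * b c.2.1 c.2.2 c.1) = F c * G c := by
    intro c hc
    have hl : 0 < lam c.1 := hlamS c.1 (Finset.mem_product.1 hc).1
    have hsq : Real.sqrt (w c.2 / lam c.1) * Real.sqrt (w c.2 * lam c.1) = w c.2 := by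
      rw [← Real.sqrt_mul (div_nonneg (hw0 c.2) hl.le)]
      have h3 : w c.2 / lam c.1 * (w c.2 * lam c.1) = w c.2 ^ 2 := by
        field_simp
      rw [h3, Real.sqrt_sq (hw0 c.2)]
    calc w c.2 * (a c.2.2 c.1 * b c.2.1 c.2.2 c.1)
        = (Real.sqrt (w c.2 / lam c.1) * Real.sqrt (w c.2 * lam c.1))
            * (a c.2.2 c.1 * b c.2.1 c.2.2 c.1) := by rw [hsq]
      _ = F c * G c := by simp only [hF, hG]; ring
  -- sum of F²  equals the number of nonzero eigenvalues
  have hFsum : ∑ c ∈ s, F c ^ 2 = (S.card : ℝ) := by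
    rw [hs, Finset.sum_product]
    have hone : ∀ k ∈ S, (∑ p : Θ × I, F (k, p) ^ 2) = 1 := by
      intro k hk
      have hl := hlamS k hk
      have hterm : ∀ p : Θ × I, F (k, p) ^ 2 = w p * a p.2 k ^ 2 / lam k := by
        intro p
        rw [hF]
        simp only
        rw [mul_pow, Real.sq_sqrt (div_nonneg (hw0 p) hl.le)]
        ring
      have hsum : ∑ p : Θ × I, w p * a p.2 k ^ 2 = ∑ i, ν i * a i k ^ 2 := by
        rw [Fintype.sum_prod_type, Finset.sum_comm]
        refine Finset.sum_congr rfl fun i _ => ?_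
        simp only [hν, hw]
        rw [Finset.sum_mul]
      calc (∑ p : Θ × I, F (k, p) ^ 2)
          = (∑ p : Θ × I, w p * a p.2 k ^ 2) / lam k := by
            rw [Finset.sum_div]
            exact Finset.sum_congr rfl fun p _ => hterm p
        _ = 1 := by rw [hsum, ← hlam_eq k, div_self (ne_of_gt hl)]
    rw [Finset.sum_congr rfl hone]
    simp
  -- sum of G² is at most the decoupled second moment
  have hGsum : ∑ c ∈ s, G c ^ 2
      ≤ ∑ θ, μ θ * ∑ θ', μ θ' * ∑ i, q θ' i * f θ i ^ 2 := by
    have hGterm : ∀ c ∈ s, G c ^ 2 = w c.2 * (lam c.1 * b c.2.1 c.2.2 c.1 ^ 2) := by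
      intro c hc
      have hl := (hlamS c.1 (Finset.mem_product.1 hc).1).le
      rw [hG]
      simp only
      rw [mul_pow, Real.sq_sqrt (mul_nonneg (hw0 c.2) hl)]
      ring
    calc ∑ c ∈ s, G c ^ 2
        = ∑ p : Θ × I, ∑ k ∈ S, w p * (lam k * b p.1 p.2 k ^ 2) := by
          rw [Finset.sum_congr rfl hGterm, hs, Finset.sum_product]
          exact Finset.sum_comm
      _ ≤ ∑ p : Θ × I, w p * ∑ i', ν i' * ⟪X i', z p.1 p.2⟫ ^ 2 := by
          refine Finset.sum_le_sum fun p _ => ?_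
          rw [← Finset.mul_sum, ← hzT p.1 p.2]
          refine mul_le_mul_of_nonneg_left ?_ (hw0 p)
          refine Finset.sum_le_sum_of_subset_of_nonneg (Finset.subset_univ S)
            fun k _ _ => mul_nonneg (hlam0 k) (sq_nonneg _)
      _ ≤ ∑ p : Θ × I, w p * ∑ i', ν i' * f p.1 i' ^ 2 := by
          refine Finset.sum_le_sum fun p _ => mul_le_mul_of_nonneg_left ?_ (hw0 p)
          refine Finset.sum_le_sum fun i' _ => mul_le_mul_of_nonneg_left ?_ (hν0 i')
          calc ⟪X i', z p.1 p.2⟫ ^ 2 = |⟪X i', z p.1 p.2⟫| ^ 2 := (sq_abs _).symm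
            _ ≤ f p.1 i' ^ 2 := pow_le_pow_left₀ (abs_nonneg _) (hz2 p.1 p.2 i') 2
      _ = ∑ θ, μ θ * ∑ θ', μ θ' * ∑ i, q θ' i * f θ i ^ 2 := by
          rw [Fintype.sum_prod_type]
          refine Finset.sum_congr rfl fun θ _ => ?_
          have hC : ∑ i', ν i' * f θ i' ^ 2
              = ∑ θ', μ θ' * ∑ i, q θ' i * f θ i ^ 2 := by
            calc ∑ i', ν i' * f θ i' ^ 2
                = ∑ i', ∑ θ', μ θ' * q θ' i' * f θ i' ^ 2 := by
                  refine Finset.sum_congr rfl fun i' _ => ?_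
                  simp only [hν]
                  rw [Finset.sum_mul]
              _ = ∑ θ', ∑ i', μ θ' * q θ' i' * f θ i' ^ 2 := Finset.sum_comm
              _ = ∑ θ', μ θ' * ∑ i, q θ' i * f θ i ^ 2 := by
                  refine Finset.sum_congr rfl fun θ' _ => ?_
                  rw [Finset.mul_sum]
                  exact Finset.sum_congr rfl fun i _ => by ring
          calc ∑ i, w (θ, i) * ∑ i', ν i' * f θ i' ^ 2
              = (∑ i, w (θ, i)) * ∑ i', ν i' * f θ i' ^ 2 := by
                rw [Finset.sum_mul]
            _ = μ θ * ∑ i', ν i' * f θ i' ^ 2 := by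
                simp only [hw]
                rw [← Finset.mul_sum, hq1 θ, mul_one]
            _ = μ θ * ∑ θ', μ θ' * ∑ i, q θ' i * f θ i ^ 2 := by rw [hC]
  -- finish via Cauchy-Schwarz
  have hQ0 : 0 ≤ ∑ c ∈ s, G c ^ 2 := Finset.sum_nonneg fun c _ => sq_nonneg _
  have hLs : ∑ θ, μ θ * ∑ i, q θ i * f θ i = ∑ c ∈ s, F c * G c := by
    rw [hL]
    exact Finset.sum_congr rfl hFG
  rw [hLs]
  have h1 : (∑ c ∈ s, F c * G c) ^ 2
      ≤ (d : ℝ) * ∑ θ, μ θ * ∑ θ', μ θ' * ∑ i, q θ' i * f θ i ^ 2 := by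
    calc (∑ c ∈ s, F c * G c) ^ 2
        ≤ (∑ c ∈ s, F c ^ 2) * (∑ c ∈ s, G c ^ 2) :=
          Finset.sum_mul_sq_le_sq_mul_sq s F G
      _ ≤ (d : ℝ) * ∑ θ, μ θ * ∑ θ', μ θ' * ∑ i, q θ' i * f θ i ^ 2 := by
          refine mul_le_mul ?_ hGsum hQ0 (Nat.cast_nonneg d)
          rw [hFsum]
          exact_mod_cast hSd
  calc ∑ c ∈ s, F c * G c ≤ |∑ c ∈ s, F c * G c| := le_abs_self _
    _ = Real.sqrt ((∑ c ∈ s, F c * G c) ^ 2) := (Real.sqrt_sq_eq_abs _).symm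
    _ ≤ Real.sqrt ((d : ℝ) * ∑ θ, μ θ * ∑ θ', μ θ' * ∑ i, q θ' i * f θ i ^ 2) :=
        Real.sqrt_le_sqrt h1
end

section
/- Linear decoupling inequality: Let mu be a finitely supported distribution over Theta, {x_i} in R^n with span of dimension at most d, {q_theta} distributions over I, and y_theta in R^n bounded. Then E_{theta ~ mu} E_{i ~ q_theta} [ |<x_i, y_theta>| ] <= sqrt( d * E_{theta, theta' ~ mu} E_{i ~ q_{theta'}} [ <x_i, y_theta>^2 ] ). -/
open Finset Matrix

/-- Linear decoupling inequality: for a finitely supported distribution `μ`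
on `Θ`, vectors `x_i` spanning a subspace of dimension `≤ d`, distributions `q_θ` on `I`,
and vectors `y_θ`,
`E_{θ∼μ} E_{i∼q_θ}[|⟨x_i, y_θ⟩|] ≤ √(d · E_{θ,θ'∼μ} E_{i∼q_{θ'}}[⟨x_i, y_θ⟩²])`. -/
theorem linear_decoupling
    {Θ I : Type*} [Fintype Θ] [Fintype I] (n d : ℕ)
    (μ : Θ → ℝ) (hμ0 : ∀ θ, 0 ≤ μ θ) (hμ1 : ∑ θ, μ θ = 1)
    (q : Θ → I → ℝ) (hq0 : ∀ θ i, 0 ≤ q θ i) (hq1 : ∀ θ, ∑ i, q θ i = 1)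
    (x : I → Fin n → ℝ)
    (hdim : Module.finrank ℝ (Submodule.span ℝ (Set.range x)) ≤ d)
    (y : Θ → Fin n → ℝ) :
    ∑ θ, μ θ * ∑ i, q θ i * |x i ⬝ᵥ y θ|
      ≤ Real.sqrt (d * ∑ θ, μ θ * ∑ θ', μ θ' * ∑ i, q θ' i * (x i ⬝ᵥ y θ) ^ 2) := by
  classical
  let e : EuclideanSpace ℝ (Fin n) ≃ₗ[ℝ] (Fin n → ℝ) := WithLp.linearEquiv 2 ℝ (Fin n → ℝ)
  let X : I → EuclideanSpace ℝ (Fin n) := fun i => e.symm (x i)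
  let Y : Θ → EuclideanSpace ℝ (Fin n) := fun θ => e.symm (y θ)
  have hdot : ∀ i θ, x i ⬝ᵥ y θ = (inner ℝ (X i) (Y θ) : ℝ) := by
    intro i θ
    rw [PiLp.inner_apply]
    simp [X, Y, e, WithLp.linearEquiv, RCLike.inner_apply, dotProduct,
      mul_comm]
  -- weights
  let w : I → ℝ := fun i => ∑ θ, μ θ * q θ i
  have hw0 : ∀ i, 0 ≤ w i := fun i => sum_nonneg fun θ _ => mul_nonneg (hμ0 θ) (hq0 θ i)
  -- the operator T
  let T : EuclideanSpace ℝ (Fin n) →ₗ[ℝ] EuclideanSpace ℝ (Fin n) := ∑ i, w i • ((innerₛₗ ℝ (X i)).smulRight (X i))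
  have hTapply : ∀ v : EuclideanSpace ℝ (Fin n), T v = ∑ i, w i • ((inner ℝ (X i) v : ℝ) • X i) := by
    intro v
    simp [T, LinearMap.sum_apply]
  have hsym : T.IsSymmetric := by
    intro u v
    simp only [hTapply, sum_inner, inner_sum, real_inner_smul_left, real_inner_smul_right]
    refine Finset.sum_congr rfl fun i _ => ?_
    rw [real_inner_comm (X i) u, real_inner_comm u (X i)]
    ring
  have hTinner : ∀ v : EuclideanSpace ℝ (Fin n), (inner ℝ v (T v) : ℝ) = ∑ i, w i * (inner ℝ (X i) v : ℝ) ^ 2 := by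
    intro v
    simp only [hTapply, inner_sum, real_inner_smul_right]
    refine Finset.sum_congr rfl fun i _ => ?_
    rw [real_inner_comm v (X i)]
    ring
  have hfin : Module.finrank ℝ (EuclideanSpace ℝ (Fin n)) = n := finrank_euclideanSpace_fin
  let b := hsym.eigenvectorBasis hfin
  let lam := hsym.eigenvalues hfin
  have hb : ∀ k, T (b k) = lam k • b k := fun k => hsym.apply_eigenvectorBasis hfin k
  have hlam_eq : ∀ k, lam k = ∑ i, w i * (inner ℝ (X i) (b k) : ℝ) ^ 2 := by
    intro k
    have h1 : (inner ℝ (b k) (T (b k)) : ℝ) = lam k := by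
      rw [hb k, real_inner_smul_right, real_inner_self_eq_norm_sq, b.orthonormal.1 k]
      simp
    rw [← h1, hTinner]
  have hlam0 : ∀ k, 0 ≤ lam k := by
    intro k
    rw [hlam_eq]
    exact sum_nonneg fun i _ => mul_nonneg (hw0 i) (sq_nonneg _)
  let K : Finset (Fin n) := univ.filter fun k => lam k ≠ 0
  have hlamK : ∀ k ∈ K, 0 < lam k := by
    intro k hk
    exact lt_of_le_of_ne (hlam0 k) (Ne.symm (mem_filter.mp hk).2)
  have hzero : ∀ i, 0 < w i → ∀ k, lam k = 0 → (inner ℝ (X i) (b k) : ℝ) = 0 := by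
    intro i hwi k hk
    have h : (∑ j, w j * (inner ℝ (X j) (b k) : ℝ) ^ 2) = 0 := (hlam_eq k).symm.trans hk
    have h2 := (Finset.sum_eq_zero_iff_of_nonneg
      (fun j _ => mul_nonneg (hw0 j) (sq_nonneg ((inner ℝ (X j) (b k) : ℝ))))).mp h
    have := h2 i (mem_univ i)
    have hsq : (inner ℝ (X i) (b k) : ℝ) ^ 2 = 0 := by
      rcases mul_eq_zero.mp this with h' | h'
      · exact absurd h' (ne_of_gt hwi)
      · exact h'
    exact pow_eq_zero_iff (two_ne_zero) |>.mp hsq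
  have hexp : ∀ i θ, 0 < w i →
      (inner ℝ (X i) (Y θ) : ℝ) = ∑ k ∈ K, (inner ℝ (X i) (b k) : ℝ) * (inner ℝ (b k) (Y θ) : ℝ) := by
    intro i θ hwi
    rw [← b.sum_inner_mul_inner (X i) (Y θ)]
    refine (Finset.sum_subset K.subset_univ ?_).symm
    intro k _ hk
    have hl : lam k = 0 := by
      by_contra h
      exact hk (mem_filter.mpr ⟨mem_univ k, h⟩)
    rw [hzero i hwi k hl, zero_mul]
  let a : I → ℝ := fun i => ∑ k ∈ K, (inner ℝ (X i) (b k) : ℝ) ^ 2 / lam k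
  let g : Θ → ℝ := fun θ => ∑ k ∈ K, lam k * (inner ℝ (b k) (Y θ) : ℝ) ^ 2
  have ha0 : ∀ i, 0 ≤ a i := fun i =>
    sum_nonneg fun k hk => div_nonneg (sq_nonneg _) (hlam0 k)
  have hg0 : ∀ θ, 0 ≤ g θ := fun θ =>
    sum_nonneg fun k hk => mul_nonneg (hlam0 k) (sq_nonneg _)
  -- pointwise bound
  have key : ∀ i θ, 0 < w i →
      |(inner ℝ (X i) (Y θ) : ℝ)| ≤ Real.sqrt (a i) * Real.sqrt (g θ) := by
    intro i θ hwi
    have hcs := sum_mul_sq_le_sq_mul_sq K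
      (fun k => (inner ℝ (X i) (b k) : ℝ) / Real.sqrt (lam k))
      (fun k => Real.sqrt (lam k) * (inner ℝ (b k) (Y θ) : ℝ))
    have h1 : ∀ k ∈ K, ((inner ℝ (X i) (b k) : ℝ) / Real.sqrt (lam k)) *
        (Real.sqrt (lam k) * (inner ℝ (b k) (Y θ) : ℝ)) =
        (inner ℝ (X i) (b k) : ℝ) * (inner ℝ (b k) (Y θ) : ℝ) := by
      intro k hk
      have hs : Real.sqrt (lam k) ≠ 0 := ne_of_gt (Real.sqrt_pos.mpr (hlamK k hk))
      field_simp
    have h2 : ∀ k ∈ K, ((inner ℝ (X i) (b k) : ℝ) / Real.sqrt (lam k)) ^ 2 =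
        (inner ℝ (X i) (b k) : ℝ) ^ 2 / lam k := by
      intro k hk
      rw [div_pow, Real.sq_sqrt (hlam0 k)]
    have h3 : ∀ k ∈ K, (Real.sqrt (lam k) * (inner ℝ (b k) (Y θ) : ℝ)) ^ 2 =
        lam k * (inner ℝ (b k) (Y θ) : ℝ) ^ 2 := by
      intro k hk
      rw [mul_pow, Real.sq_sqrt (hlam0 k)]
    rw [Finset.sum_congr rfl h1, Finset.sum_congr rfl h2, Finset.sum_congr rfl h3] at hcs
    rw [← hexp i θ hwi] at hcs
    calc |(inner ℝ (X i) (Y θ) : ℝ)| = Real.sqrt ((inner ℝ (X i) (Y θ) : ℝ) ^ 2) :=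
          (Real.sqrt_sq_eq_abs _).symm
      _ ≤ Real.sqrt (a i * g θ) := Real.sqrt_le_sqrt hcs
      _ = Real.sqrt (a i) * Real.sqrt (g θ) := Real.sqrt_mul (ha0 i) _
  -- the sums
  set S1 : ℝ := ∑ θ, ∑ i, (μ θ * q θ i) * a i with hS1
  set S2 : ℝ := ∑ θ, ∑ i, (μ θ * q θ i) * g θ with hS2
  set tgt : ℝ := ∑ θ, μ θ * ∑ θ', μ θ' * ∑ i, q θ' i * (x i ⬝ᵥ y θ) ^ 2 with htgt
  have htgt_inner : ∀ θ, (∑ θ', μ θ' * ∑ i, q θ' i * (x i ⬝ᵥ y θ) ^ 2)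
      = ∑ i, w i * (inner ℝ (X i) (Y θ) : ℝ) ^ 2 := by
    intro θ
    simp_rw [mul_sum, ← mul_assoc]
    rw [Finset.sum_comm]
    refine Finset.sum_congr rfl fun i _ => ?_
    rw [hdot, ← Finset.sum_mul]
  have htgt0 : 0 ≤ tgt := by
    rw [htgt]
    refine sum_nonneg fun θ _ => mul_nonneg (hμ0 θ) ?_
    rw [htgt_inner θ]
    exact sum_nonneg fun i _ => mul_nonneg (hw0 i) (sq_nonneg _)
  -- step 1
  have step1 : ∑ θ, μ θ * ∑ i, q θ i * |x i ⬝ᵥ y θ|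
      ≤ ∑ θ, ∑ i, (μ θ * q θ i) * (Real.sqrt (a i) * Real.sqrt (g θ)) := by
    simp_rw [mul_sum, ← mul_assoc]
    refine Finset.sum_le_sum fun θ _ => Finset.sum_le_sum fun i _ => ?_
    rcases eq_or_lt_of_le (mul_nonneg (hμ0 θ) (hq0 θ i)) with h | h
    · rw [← h]
      simp
    · have hwi : 0 < w i :=
        lt_of_lt_of_le h (Finset.single_le_sum
          (fun θ' _ => mul_nonneg (hμ0 θ') (hq0 θ' i)) (mem_univ θ))
      rw [hdot]
      have h2 := mul_le_mul_of_nonneg_left (key i θ hwi) h.le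
      linarith [h2]
  -- step 2: Cauchy-Schwarz over pairs
  have step2 : ∑ θ, ∑ i, (μ θ * q θ i) * (Real.sqrt (a i) * Real.sqrt (g θ))
      ≤ Real.sqrt S1 * Real.sqrt S2 := by
    have hcs := sum_mul_sq_le_sq_mul_sq (univ ×ˢ univ : Finset (Θ × I))
      (fun p => Real.sqrt ((μ p.1 * q p.1 p.2) * a p.2))
      (fun p => Real.sqrt ((μ p.1 * q p.1 p.2) * g p.1))
    have h1 : ∀ p ∈ (univ ×ˢ univ : Finset (Θ × I)),
        Real.sqrt ((μ p.1 * q p.1 p.2) * a p.2) * Real.sqrt ((μ p.1 * q p.1 p.2) * g p.1)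
        = (μ p.1 * q p.1 p.2) * (Real.sqrt (a p.2) * Real.sqrt (g p.1)) := by
      intro p _
      have hc : 0 ≤ μ p.1 * q p.1 p.2 := mul_nonneg (hμ0 p.1) (hq0 p.1 p.2)
      rw [Real.sqrt_mul hc, Real.sqrt_mul hc]
      rw [show Real.sqrt (μ p.1 * q p.1 p.2) * Real.sqrt (a p.2) *
        (Real.sqrt (μ p.1 * q p.1 p.2) * Real.sqrt (g p.1)) =
        (Real.sqrt (μ p.1 * q p.1 p.2) * Real.sqrt (μ p.1 * q p.1 p.2)) *
          (Real.sqrt (a p.2) * Real.sqrt (g p.1)) by ring]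
      rw [Real.mul_self_sqrt hc]
    have h2 : ∀ p ∈ (univ ×ˢ univ : Finset (Θ × I)),
        (Real.sqrt ((μ p.1 * q p.1 p.2) * a p.2)) ^ 2 = (μ p.1 * q p.1 p.2) * a p.2 := by
      intro p _
      exact Real.sq_sqrt (mul_nonneg (mul_nonneg (hμ0 p.1) (hq0 p.1 p.2)) (ha0 p.2))
    have h3 : ∀ p ∈ (univ ×ˢ univ : Finset (Θ × I)),
        (Real.sqrt ((μ p.1 * q p.1 p.2) * g p.1)) ^ 2 = (μ p.1 * q p.1 p.2) * g p.1 := by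
      intro p _
      exact Real.sq_sqrt (mul_nonneg (mul_nonneg (hμ0 p.1) (hq0 p.1 p.2)) (hg0 p.1))
    rw [Finset.sum_congr rfl h1, Finset.sum_congr rfl h2, Finset.sum_congr rfl h3] at hcs
    rw [Finset.sum_product, Finset.sum_product, Finset.sum_product] at hcs
    rw [← hS1, ← hS2] at hcs
    have hnn : 0 ≤ ∑ θ, ∑ i, (μ θ * q θ i) * (Real.sqrt (a i) * Real.sqrt (g θ)) :=
      sum_nonneg fun θ _ => sum_nonneg fun i _ =>
        mul_nonneg (mul_nonneg (hμ0 θ) (hq0 θ i))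
          (mul_nonneg (Real.sqrt_nonneg _) (Real.sqrt_nonneg _))
    calc ∑ θ, ∑ i, (μ θ * q θ i) * (Real.sqrt (a i) * Real.sqrt (g θ))
        = Real.sqrt ((∑ θ, ∑ i, (μ θ * q θ i) * (Real.sqrt (a i) * Real.sqrt (g θ))) ^ 2) := by
          rw [Real.sqrt_sq hnn]
      _ ≤ Real.sqrt (S1 * S2) := Real.sqrt_le_sqrt hcs
      _ = Real.sqrt S1 * Real.sqrt S2 := Real.sqrt_mul (by
            rw [hS1]
            exact sum_nonneg fun θ _ => sum_nonneg fun i _ =>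
              mul_nonneg (mul_nonneg (hμ0 θ) (hq0 θ i)) (ha0 i)) _
  -- step 3: S1 ≤ d
  have hS1d : S1 ≤ (d : ℝ) := by
    have hswap : S1 = ∑ i, w i * a i := by
      rw [hS1, Finset.sum_comm]
      refine Finset.sum_congr rfl fun i _ => ?_
      rw [← Finset.sum_mul]
    have hcard : ∑ i, w i * a i = (K.card : ℝ) := by
      simp_rw [a, mul_sum]
      rw [Finset.sum_comm]
      have : ∀ k ∈ K, (∑ i, w i * ((inner ℝ (X i) (b k) : ℝ) ^ 2 / lam k)) = 1 := by
        intro k hk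
        have hl := hlamK k hk
        rw [show (∑ i, w i * ((inner ℝ (X i) (b k) : ℝ) ^ 2 / lam k))
            = (∑ i, w i * (inner ℝ (X i) (b k) : ℝ) ^ 2) / lam k by
          rw [Finset.sum_div]; exact Finset.sum_congr rfl fun i _ => by ring]
        rw [← hlam_eq k, div_self (ne_of_gt hl)]
      rw [Finset.sum_congr rfl this, Finset.sum_const, nsmul_eq_mul, mul_one]
    have hcardd : K.card ≤ d := by
      have hmem : ∀ k : Fin n, k ∈ K → b k ∈ Submodule.span ℝ (Set.range X) := by
        intro k hk
        have hl := hlamK k hk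
        have : b k = (lam k)⁻¹ • T (b k) := by
          rw [hb k, smul_smul, inv_mul_cancel₀ (ne_of_gt hl), one_smul]
        rw [this, hTapply]
        exact Submodule.smul_mem _ _ (Submodule.sum_mem _ fun i _ => Submodule.smul_mem _ _
          (Submodule.smul_mem _ _ (Submodule.subset_span (Set.mem_range_self i))))
      let v : {k // k ∈ K} → Submodule.span ℝ (Set.range X) :=
        fun k => ⟨b k.1, hmem k.1 k.2⟩
      have hli : LinearIndependent ℝ v := by
        have h1 : LinearIndependent ℝ (fun k : {k // k ∈ K} => b k.1) :=
          b.orthonormal.linearIndependent.comp Subtype.val Subtype.val_injective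
        exact LinearIndependent.of_comp (Submodule.span ℝ (Set.range X)).subtype h1
      have h2 := hli.fintype_card_le_finrank
      rw [Fintype.card_coe] at h2
      have h3 : Module.finrank ℝ (Submodule.span ℝ (Set.range X))
          = Module.finrank ℝ (Submodule.span ℝ (Set.range x)) := by
        have hmap : (Submodule.span ℝ (Set.range X)).map (e : EuclideanSpace ℝ (Fin n) →ₗ[ℝ] (Fin n → ℝ))
            = Submodule.span ℝ (Set.range x) := by
          rw [Submodule.map_span]
          have hcomp : (⇑(e : EuclideanSpace ℝ (Fin n) →ₗ[ℝ] (Fin n → ℝ)) ∘ X) = x :=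
            funext fun i => e.apply_symm_apply (x i)
          rw [← Set.range_comp, hcomp]
        rw [← hmap, LinearEquiv.finrank_map_eq]
      exact le_trans (h3 ▸ h2) hdim
    calc S1 = (K.card : ℝ) := by rw [hswap, hcard]
      _ ≤ (d : ℝ) := Nat.cast_le.mpr hcardd
  -- step 4: S2 ≤ tgt
  have hS2t : S2 ≤ tgt := by
    have hS2eq : S2 = ∑ θ, μ θ * g θ := by
      rw [hS2]
      refine Finset.sum_congr rfl fun θ _ => ?_
      rw [show (∑ i, (μ θ * q θ i) * g θ) = (μ θ * g θ) * ∑ i, q θ i by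
        rw [Finset.mul_sum]; exact Finset.sum_congr rfl fun i _ => by ring]
      rw [hq1 θ, mul_one]
    rw [hS2eq, htgt]
    refine Finset.sum_le_sum fun θ _ => ?_
    refine mul_le_mul_of_nonneg_left ?_ (hμ0 θ)
    rw [htgt_inner θ]
    have hfull : (∑ k, lam k * (inner ℝ (b k) (Y θ) : ℝ) ^ 2)
        = ∑ i, w i * (inner ℝ (X i) (Y θ) : ℝ) ^ 2 := by
      rw [← hTinner (Y θ)]
      rw [← b.sum_inner_mul_inner (Y θ) (T (Y θ))]
      refine Finset.sum_congr rfl fun k _ => ?_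
      rw [← hsym (b k) (Y θ), hb k, real_inner_smul_left]
      rw [real_inner_comm (Y θ) (b k)]
      ring
    rw [← hfull]
    exact Finset.sum_le_sum_of_subset_of_nonneg K.subset_univ
      fun k _ _ => mul_nonneg (hlam0 k) (sq_nonneg _)
  -- combine
  calc ∑ θ, μ θ * ∑ i, q θ i * |x i ⬝ᵥ y θ|
      ≤ ∑ θ, ∑ i, (μ θ * q θ i) * (Real.sqrt (a i) * Real.sqrt (g θ)) := step1
    _ ≤ Real.sqrt S1 * Real.sqrt S2 := step2
    _ ≤ Real.sqrt d * Real.sqrt tgt :=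
        mul_le_mul (Real.sqrt_le_sqrt hS1d) (Real.sqrt_le_sqrt hS2t)
          (Real.sqrt_nonneg _) (Real.sqrt_nonneg _)
    _ = Real.sqrt (d * tgt) := (Real.sqrt_mul (Nat.cast_nonneg d) _).symm
end

section
/- Barycentric spanner factorization: Let {x_i}_{i in I} be a family of vectors in R^n such that span{x_i} has dimension at most d and R = max_i ||x_i||_1 < infinity (I finite). Then there exist vectors v_i in R^d and a matrix F in R^{n x d} such that x_i = F v_i for all i, ||v_i||_infinity <= 1 for all i, and ||F||_{1 -> 1} <= R (i.e., every column of F has 1-norm at most R). -/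
open Finset Matrix

private lemma gram_quad {n r : ℕ} (A : Matrix (Fin n) (Fin r) ℝ) (v : Fin r → ℝ) :
    v ⬝ᵥ ((Aᵀ * A) *ᵥ v) = (A *ᵥ v) ⬝ᵥ (A *ᵥ v) := by
  rw [← mulVec_mulVec, dotProduct_mulVec, vecMul_transpose]

private lemma gram_posdef {n r : ℕ} (A : Matrix (Fin n) (Fin r) ℝ)
    (h : ∀ v, A *ᵥ v = 0 → v = 0) : (Aᵀ * A).PosDef := by
  rw [posDef_iff_dotProduct_mulVec]
  constructor
  · rw [Matrix.IsHermitian, ← conjTranspose_eq_transpose_of_trivial,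
      conjTranspose_mul, conjTranspose_conjTranspose]
  · intro v hv
    have hstar : star v = v := rfl
    rw [hstar, gram_quad]
    have hnn : (0:ℝ) ≤ (A *ᵥ v) ⬝ᵥ (A *ᵥ v) :=
      Finset.sum_nonneg fun i _ => mul_self_nonneg _
    rcases hnn.lt_or_eq with h' | h'
    · exact h'
    · exfalso
      apply hv
      apply h
      funext p
      have := (Finset.sum_eq_zero_iff_of_nonneg
        (fun i _ => mul_self_nonneg ((A *ᵥ v) i))).mp h'.symm p (Finset.mem_univ p)
      exact mul_self_eq_zero.mp this

/-- Barycentric spanner factorization: if `{x_i}` in `ℝⁿ` span a subspace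
of dimension at most `d` and `‖x_i‖₁ ≤ R` for all `i`, then there exist `v_i ∈ ℝᵈ` with
`‖v_i‖_∞ ≤ 1` and a matrix `F ∈ ℝ^{n×d}` with every column of `1`-norm at most `R`
(i.e. `‖F‖_{1→1} ≤ R`) such that `x_i = F v_i` for all `i`. -/
theorem barycentric_spanner_factorization
    {I : Type*} [Fintype I] (n d : ℕ) (x : I → Fin n → ℝ)
    (hdim : Module.finrank ℝ (Submodule.span ℝ (Set.range x)) ≤ d)
    (R : ℝ) (hR : 0 ≤ R) (hx : ∀ i, ∑ j, |x i j| ≤ R) :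
    ∃ (v : I → Fin d → ℝ) (F : Matrix (Fin n) (Fin d) ℝ),
      (∀ i, x i = F.mulVec (v i)) ∧
      (∀ i j, |v i j| ≤ 1) ∧
      (∀ c : Fin d, ∑ r, |F r c| ≤ R) := by
  classical
  set S := Submodule.span ℝ (Set.range x) with hS
  obtain ⟨t, hts, htsp, htli⟩ := exists_linearIndependent ℝ (Set.range x)
  have htfin : t.Finite := (Set.finite_range x).subset hts
  have : Fintype t := htfin.fintype
  set r : ℕ := Fintype.card t with hrdef
  have hr : Module.finrank ℝ S = r := by
    rw [hS, ← htsp, finrank_span_set_eq_card htli, Set.toFinset_card]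
  have hrd : r ≤ d := hr ▸ hdim
  -- a tuple of indices whose vectors are the basis t
  obtain ⟨e⟩ : Nonempty (Fin r ≃ t) := ⟨(Fintype.equivFin t).symm⟩
  have hchoice : ∀ j : Fin r, ∃ i : I, x i = (e j : Fin n → ℝ) := fun j => hts (e j).2
  choose w0 hw0 using hchoice
  have hw0li : LinearIndependent ℝ (x ∘ w0) := by
    have : (x ∘ w0) = (fun a : t => (a : Fin n → ℝ)) ∘ e := by
      funext j; exact hw0 j
    rw [this]
    exact htli.comp e e.injective
  -- Gram determinant
  set M : (Fin r → I) → Matrix (Fin n) (Fin r) ℝ :=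
    fun w => Matrix.of fun p j => x (w j) p with hM
  set D : (Fin r → I) → ℝ := fun w => ((M w)ᵀ * M w).det with hD
  have hMmul : ∀ w g, (M w) *ᵥ g = fun p => ∑ j, g j * x (w j) p := by
    intro w g; funext p
    simp [Matrix.mulVec, dotProduct, hM, mul_comm]
  have hD0 : 0 < D w0 := by
    refine (gram_posdef (M w0) ?_).det_pos
    intro g hg
    have h2 : ∑ j, g j • x (w0 j) = 0 := by
      funext p
      have := congrFun ((hMmul w0 g) ▸ hg) p
      simpa [Finset.sum_apply] using this
    funext j
    exact Fintype.linearIndependent_iff.mp hw0li g h2 j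
  -- maximizer
  have hne : (Finset.univ : Finset (Fin r → I)).Nonempty := ⟨w0, Finset.mem_univ _⟩
  obtain ⟨W, -, hWmax⟩ := Finset.exists_max_image Finset.univ D hne
  have hWpos : 0 < D W := lt_of_lt_of_le hD0 (hWmax w0 (Finset.mem_univ _))
  -- the maximizer is linearly independent
  have hWli : LinearIndependent ℝ (x ∘ W) := by
    rw [Fintype.linearIndependent_iff]
    intro g hg j
    by_contra hgj
    have hgne : g ≠ 0 := fun h => hgj (by rw [h]; rfl)
    have hMg : (M W) *ᵥ g = 0 := by
      rw [hMmul]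
      funext p
      have := congrFun hg p
      simpa [Finset.sum_apply] using this
    have : ((M W)ᵀ * M W) *ᵥ g = 0 := by
      rw [← mulVec_mulVec, hMg, mulVec_zero]
    have : D W = 0 := Matrix.exists_mulVec_eq_zero_iff.mp ⟨g, hgne, this⟩
    exact hWpos.ne' this
  -- the maximizer spans S : write each x i in terms of it
  have hxmem : ∀ i, x i ∈ S := fun i => Submodule.subset_span ⟨i, rfl⟩
  set y : Fin r → S := fun j => ⟨x (W j), hxmem (W j)⟩ with hy
  have hyli : LinearIndependent ℝ y := by
    apply LinearIndependent.of_comp S.subtype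
    exact hWli
  have hcoef : ∀ i, ∃ c : Fin r → ℝ, ∑ j, c j • x (W j) = x i := by
    intro i
    have hspan : Submodule.span ℝ (Set.range y) = ⊤ :=
      hyli.span_eq_top_of_card_eq_finrank' (by simp [hr])
    have : (⟨x i, hxmem i⟩ : S) ∈ Submodule.span ℝ (Set.range y) := by
      rw [hspan]; trivial
    obtain ⟨c, hc⟩ := Submodule.mem_span_range_iff_exists_fun ℝ |>.mp this
    refine ⟨c, ?_⟩
    have := congrArg (Subtype.val) hc
    simpa using this
  choose α hα using hcoef
  -- bound the coefficients by the exchange argument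
  have hbound : ∀ i k, |α i k| ≤ 1 := by
    intro i k
    set E : Matrix (Fin r) (Fin r) ℝ :=
      (1 : Matrix (Fin r) (Fin r) ℝ).updateCol k (α i) with hE
    have hdetE : E.det = α i k := by
      rw [hE, ← Matrix.cramer_apply, Matrix.cramer_one]; rfl
    set W' : Fin r → I := Function.update W k i with hW'
    have hMW' : M W' = M W * E := by
      ext p j
      rw [Matrix.mul_apply]
      by_cases hj : j = k
      · subst hj
        have : ∀ q, E q j = α i q := fun q => Matrix.updateCol_self ..
        simp only [this]
        have := congrFun (hα i) p
        simp only [Finset.sum_apply, Pi.smul_apply, smul_eq_mul] at this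
        simp only [hM, Matrix.of_apply, hW', Function.update_self]
        rw [← this]
        exact Finset.sum_congr rfl fun q _ => by ring
      · have : ∀ q, E q j = (1 : Matrix (Fin r) (Fin r) ℝ) q j := fun q =>
          Matrix.updateCol_ne hj
        simp only [this]
        simp [hM, Matrix.one_apply, hW', Function.update_of_ne hj]
    have hGW' : (M W')ᵀ * M W' = Eᵀ * ((M W)ᵀ * M W) * E := by
      rw [hMW', Matrix.transpose_mul, Matrix.mul_assoc, Matrix.mul_assoc, Matrix.mul_assoc]
    have hDW' : D W' = (α i k) ^ 2 * D W := by
      simp only [hD, hGW', Matrix.det_mul, Matrix.det_transpose, hdetE]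
      ring
    have hle : D W' ≤ D W := hWmax W' (Finset.mem_univ _)
    rw [hDW'] at hle
    have : (α i k) ^ 2 ≤ 1 := by
      nlinarith
    exact (sq_le_one_iff_abs_le_one _).mp this
  -- assemble F and v with padding
  refine ⟨fun i c => if h : (c : ℕ) < r then α i ⟨c, h⟩ else 0,
    Matrix.of fun p c => if h : (c : ℕ) < r then x (W ⟨c, h⟩) p else 0, ?_, ?_, ?_⟩
  · intro i
    funext p
    rw [Matrix.mulVec]
    simp only [dotProduct, Matrix.of_apply]
    have hterm : ∀ c : Fin d, (if h : (c : ℕ) < r then x (W ⟨c, h⟩) p else 0) *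
        (if h : (c : ℕ) < r then α i ⟨c, h⟩ else 0)
        = (fun m => if h : m < r then α i ⟨m, h⟩ * x (W ⟨m, h⟩) p else 0) (c : ℕ) := by
      intro c
      by_cases h : (c : ℕ) < r
      · simp [h, mul_comm]
      · simp [h]
    rw [Finset.sum_congr rfl (fun c _ => hterm c)]
    rw [Fin.sum_univ_eq_sum_range (fun m => if h : m < r then α i ⟨m, h⟩ * x (W ⟨m, h⟩) p else 0) d]
    rw [← Finset.sum_subset (Finset.range_subset_range.mpr hrd)
      (by intro m _ hm; simp [Finset.mem_range.not.mp hm])]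
    rw [← Fin.sum_univ_eq_sum_range (fun m => if h : m < r then α i ⟨m, h⟩ * x (W ⟨m, h⟩) p else 0) r]
    have : ∀ j : Fin r, (fun m => if h : m < r then α i ⟨m, h⟩ * x (W ⟨m, h⟩) p else 0) (j : ℕ)
        = α i j * x (W j) p := by
      intro j; simp [j.isLt]
    rw [Finset.sum_congr rfl (fun j _ => this j)]
    have := congrFun (hα i) p
    simp only [Finset.sum_apply, Pi.smul_apply, smul_eq_mul] at this
    rw [this]
  · intro i c
    by_cases h : (c : ℕ) < r
    · simpa [h] using hbound i ⟨c, h⟩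
    · simp [h]
  · intro c
    by_cases h : (c : ℕ) < r
    · simp only [Matrix.of_apply, h, dif_pos]
      exact hx (W ⟨c, h⟩)
    · simp only [Matrix.of_apply, h, dif_neg, not_false_iff, abs_zero]
      simpa using hR
end

section
/- Hellinger conditioning: For any pair of random variables (X,Y) with joint distributions P_{X,Y} and Q_{X,Y} on a finite space, the expectation under P_X of the squared Hellinger distance between the conditional laws satisfies E_{X ~ P_X}[ D_H^2( P_{Y|X}, Q_{Y|X} ) ] <= 2 D_H^2( P_{X,Y}, Q_{X,Y} ). -/
open Finset

lemma hell_expand {Y : Type*} [Fintype Y] (f g : Y → ℝ)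
    (hf : ∀ y, 0 ≤ f y) (hg : ∀ y, 0 ≤ g y) :
    ∑ y, (Real.sqrt (f y) - Real.sqrt (g y)) ^ 2
      = ∑ y, f y + ∑ y, g y - 2 * ∑ y, Real.sqrt (f y) * Real.sqrt (g y) := by
  rw [← Finset.sum_add_distrib, Finset.mul_sum, ← Finset.sum_sub_distrib]
  refine Finset.sum_congr rfl fun y _ => ?_
  rw [sub_sq, Real.sq_sqrt (hf y), Real.sq_sqrt (hg y)]
  ring

/-- Hellinger conditioning lemma: for joint distributions `P, Q` of a pair
`(X, Y)` on a finite space, with conditional kernels `pY, qY` (agreeing with the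
conditional laws `P_{Y|X}, Q_{Y|X}` wherever the marginals are nonzero, and arbitrary
probability distributions otherwise),
`E_{x ∼ P_X}[D_H²(pY x, qY x)] ≤ 2 D_H²(P, Q)`. -/
theorem hellinger_conditioning
    {X Y : Type*} [Fintype X] [Fintype Y]
    (P Q : X → Y → ℝ)
    (hP0 : ∀ x y, 0 ≤ P x y) (hP1 : ∑ x, ∑ y, P x y = 1)
    (hQ0 : ∀ x y, 0 ≤ Q x y) (hQ1 : ∑ x, ∑ y, Q x y = 1)
    (pY qY : X → Y → ℝ)
    (hpY0 : ∀ x y, 0 ≤ pY x y) (hpY1 : ∀ x, ∑ y, pY x y = 1)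
    (hqY0 : ∀ x y, 0 ≤ qY x y) (hqY1 : ∀ x, ∑ y, qY x y = 1)
    (hpYc : ∀ x, (∑ y, P x y) ≠ 0 → ∀ y, pY x y = P x y / ∑ y', P x y')
    (hqYc : ∀ x, (∑ y, Q x y) ≠ 0 → ∀ y, qY x y = Q x y / ∑ y', Q x y') :
    ∑ x, (∑ y, P x y) * (∑ y, (Real.sqrt (pY x y) - Real.sqrt (qY x y)) ^ 2)
      ≤ 2 * ∑ x, ∑ y, (Real.sqrt (P x y) - Real.sqrt (Q x y)) ^ 2 := by
  classical
  set p : X → ℝ := fun x => ∑ y, P x y with hp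
  set q : X → ℝ := fun x => ∑ y, Q x y with hq
  set a : X → ℝ := fun x => ∑ y, Real.sqrt (pY x y) * Real.sqrt (qY x y) with ha
  set b : X → ℝ := fun x => ∑ y, Real.sqrt (P x y) * Real.sqrt (Q x y) with hb
  have hp0 : ∀ x, 0 ≤ p x := fun x => Finset.sum_nonneg fun y _ => hP0 x y
  have hq0 : ∀ x, 0 ≤ q x := fun x => Finset.sum_nonneg fun y _ => hQ0 x y
  have ha0 : ∀ x, 0 ≤ a x := fun x => Finset.sum_nonneg fun y _ =>
    mul_nonneg (Real.sqrt_nonneg _) (Real.sqrt_nonneg _)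
  have ha1 : ∀ x, a x ≤ 1 := by
    intro x
    have hcs := Finset.sum_mul_sq_le_sq_mul_sq Finset.univ
      (fun y => Real.sqrt (pY x y)) (fun y => Real.sqrt (qY x y))
    have h1 : ∑ y, Real.sqrt (pY x y) ^ 2 = 1 := by
      rw [← hpY1 x]; exact Finset.sum_congr rfl fun y _ => Real.sq_sqrt (hpY0 x y)
    have h2 : ∑ y, Real.sqrt (qY x y) ^ 2 = 1 := by
      rw [← hqY1 x]; exact Finset.sum_congr rfl fun y _ => Real.sq_sqrt (hqY0 x y)
    rw [h1, h2] at hcs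
    nlinarith [ha0 x]
  -- per-x bound on b
  have hbkey : ∀ x, 2 * b x ≤ (p x + q x) * a x := by
    intro x
    by_cases hpx : p x = 0
    · have hPz : ∀ y, P x y = 0 := by
        intro y
        have := (Finset.sum_eq_zero_iff_of_nonneg (fun y _ => hP0 x y)).1 hpx
        exact this y (Finset.mem_univ y)
      have hbz : b x = 0 := by
        simp only [hb]
        refine Finset.sum_eq_zero fun y _ => ?_
        rw [hPz y, Real.sqrt_zero, zero_mul]
      rw [hbz]
      have : 0 ≤ (p x + q x) * a x :=
        mul_nonneg (add_nonneg (hp0 x) (hq0 x)) (ha0 x)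
      linarith
    · by_cases hqx : q x = 0
      · have hQz : ∀ y, Q x y = 0 := by
          intro y
          have := (Finset.sum_eq_zero_iff_of_nonneg (fun y _ => hQ0 x y)).1 hqx
          exact this y (Finset.mem_univ y)
        have hbz : b x = 0 := by
          simp only [hb]
          refine Finset.sum_eq_zero fun y _ => ?_
          rw [hQz y, Real.sqrt_zero, mul_zero]
        rw [hbz]
        have : 0 ≤ (p x + q x) * a x :=
          mul_nonneg (add_nonneg (hp0 x) (hq0 x)) (ha0 x)
        linarith
      · have hPy : ∀ y, P x y = p x * pY x y := by
          intro y
          rw [hpYc x hpx y]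
          field_simp
          exact (mul_div_cancel_right₀ _ hpx).symm
        have hQy : ∀ y, Q x y = q x * qY x y := by
          intro y
          rw [hqYc x hqx y]
          field_simp
          exact (mul_div_cancel_right₀ _ hqx).symm
        have hbeq : b x = Real.sqrt (p x) * Real.sqrt (q x) * a x := by
          simp only [hb, ha, Finset.mul_sum]
          refine Finset.sum_congr rfl fun y _ => ?_
          rw [hPy y, hQy y, Real.sqrt_mul (hp0 x), Real.sqrt_mul (hq0 x)]
          ring
        rw [hbeq]
        nlinarith [sq_nonneg (Real.sqrt (p x) - Real.sqrt (q x)),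
          Real.sq_sqrt (hp0 x), Real.sq_sqrt (hq0 x), ha0 x]
  -- rewrite LHS
  have hL : ∑ x, p x * (∑ y, (Real.sqrt (pY x y) - Real.sqrt (qY x y)) ^ 2)
      = 2 - 2 * ∑ x, p x * a x := by
    have : ∀ x, (∑ y, (Real.sqrt (pY x y) - Real.sqrt (qY x y)) ^ 2) = 2 - 2 * a x := by
      intro x
      rw [hell_expand _ _ (hpY0 x) (hqY0 x), hpY1 x, hqY1 x]
      ring
    calc ∑ x, p x * (∑ y, (Real.sqrt (pY x y) - Real.sqrt (qY x y)) ^ 2)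
        = ∑ x, (2 * p x - 2 * (p x * a x)) := by
          refine Finset.sum_congr rfl fun x _ => ?_
          rw [this x]; ring
      _ = 2 * ∑ x, p x - 2 * ∑ x, p x * a x := by
          rw [Finset.sum_sub_distrib, Finset.mul_sum, Finset.mul_sum]
      _ = 2 - 2 * ∑ x, p x * a x := by rw [show ∑ x, p x = 1 from hP1]; ring
  -- rewrite RHS
  have hR : ∑ x, ∑ y, (Real.sqrt (P x y) - Real.sqrt (Q x y)) ^ 2
      = 2 - 2 * ∑ x, b x := by
    calc ∑ x, ∑ y, (Real.sqrt (P x y) - Real.sqrt (Q x y)) ^ 2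
        = ∑ x, (p x + q x - 2 * b x) := by
          refine Finset.sum_congr rfl fun x _ => ?_
          exact hell_expand _ _ (hP0 x) (hQ0 x)
      _ = ∑ x, p x + ∑ x, q x - 2 * ∑ x, b x := by
          rw [Finset.sum_sub_distrib, Finset.sum_add_distrib, Finset.mul_sum]
      _ = 2 - 2 * ∑ x, b x := by
          rw [show ∑ x, p x = 1 from hP1, show ∑ x, q x = 1 from hQ1]; ring
  rw [hL, hR]
  have h2b : 2 * ∑ x, b x ≤ ∑ x, p x * a x + ∑ x, q x * a x := by
    rw [← Finset.sum_add_distrib, Finset.mul_sum]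
    refine Finset.sum_le_sum fun x _ => ?_
    have := hbkey x
    nlinarith
  have hqa : ∑ x, q x * a x ≤ 1 := by
    calc ∑ x, q x * a x ≤ ∑ x, q x :=
          Finset.sum_le_sum fun x _ => by nlinarith [hq0 x, ha1 x, ha0 x]
      _ = 1 := hQ1
  linarith
end

section
/- Martingale exponential concentration: Let (X_t)_{t <= T} be real-valued random variables adapted to a filtration (F_t)_{t <= T}. Then with probability at least 1 - delta, for all t in [T]: sum_{s=1}^t ( - log E[ exp(-X_s) | F_{s-1} ] ) <= sum_{s=1}^t X_s + log(1/delta). -/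
open MeasureTheory Finset
open scoped ENNReal NNReal

lemma aux_lintegral_condexp {Ω : Type*} {m' : MeasurableSpace Ω} [m : MeasurableSpace Ω] (hm : m' ≤ m)
    (μ : Measure Ω) [IsFiniteMeasure μ] {h : Ω → ℝ} (hh : Integrable h μ)
    (hh0 : 0 ≤ᵐ[μ] h) {φ : Ω → ℝ≥0∞} (hφ : Measurable[m'] φ) :
    ∫⁻ ω, φ ω * ENNReal.ofReal (h ω) ∂μ = ∫⁻ ω, φ ω * ENNReal.ofReal ((μ[h|m']) ω) ∂μ := by
  set g := μ[h|m'] with hgdef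
  have hgint : Integrable g μ := integrable_condExp
  have hg0 : 0 ≤ᵐ[μ] g := condExp_nonneg hh0
  have hφm : Measurable φ := hφ.le hm
  have key : ∀ {f : Ω → ℝ}, Integrable f μ →
      ∫⁻ ω, φ ω * ENNReal.ofReal (f ω) ∂μ
        = ∫⁻ ω, φ ω ∂(μ.withDensity fun ω => ENNReal.ofReal (f ω)) := by
    intro f hf
    rw [lintegral_withDensity_eq_lintegral_mul₀ hf.aemeasurable.ennreal_ofReal hφm.aemeasurable]
    exact lintegral_congr fun ω => (mul_comm _ _)
  rw [key hh, key hgint]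
  rw [← lintegral_trim hm hφ, ← lintegral_trim hm hφ]
  congr 1
  refine @Measure.ext Ω m' _ _ (fun s hs => ?_)
  rw [trim_measurableSet_eq hm hs, trim_measurableSet_eq hm hs,
    withDensity_apply _ (hm s hs), withDensity_apply _ (hm s hs),
    ← ofReal_integral_eq_lintegral_ofReal hh.integrableOn (ae_restrict_of_ae hh0),
    ← ofReal_integral_eq_lintegral_ofReal hgint.integrableOn (ae_restrict_of_ae hg0),
    setIntegral_condExp hm hh hs]

lemma aux_condexp_pos {Ω : Type*} {m' : MeasurableSpace Ω} [m : MeasurableSpace Ω] (hm : m' ≤ m)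
    (μ : Measure Ω) [IsFiniteMeasure μ] {h : Ω → ℝ} (hh : Integrable h μ)
    (hh0 : ∀ ω, 0 < h ω) : ∀ᵐ ω ∂μ, 0 < (μ[h|m']) ω := by
  set g := μ[h|m'] with hgdef
  have hgm : StronglyMeasurable[m'] g := stronglyMeasurable_condExp
  have hA : MeasurableSet[m'] {ω | g ω ≤ 0} :=
    measurableSet_le hgm.measurable measurable_const
  have hAle : ∫ ω in {ω | g ω ≤ 0}, g ω ∂μ ≤ 0 :=
    setIntegral_nonpos (hm _ hA) fun ω hω => hω
  rw [setIntegral_condExp hm hh hA] at hAle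
  have hμA : μ {ω | g ω ≤ 0} = 0 := by
    by_contra hne
    have hpos : 0 < ∫ ω in {ω | g ω ≤ 0}, h ω ∂μ := by
      rw [setIntegral_pos_iff_support_of_nonneg_ae
        (Filter.Eventually.of_forall fun ω => (hh0 ω).le) hh.integrableOn]
      have : Function.support h = Set.univ := by
        ext ω; simp [Function.support, (hh0 ω).ne']
      rw [this, Set.univ_inter]
      exact lt_of_le_of_ne zero_le (Ne.symm hne)
    linarith
  filter_upwards [measure_eq_zero_iff_ae_notMem.mp hμA] with ω hω
  simpa using not_le.mp hω

/-- Martingale exponential concentration: for real-valued random variables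
`(X_t)_{t ≤ T}` adapted to a filtration `(F_t)_{t ≤ T}`, with probability at least
`1 - δ`, for all `t ∈ [T]`:
`∑_{s=1}^t -log E[exp(-X_s) | F_{s-1}] ≤ ∑_{s=1}^t X_s + log(1/δ)`. -/
theorem martingale_exponential_concentration
    {Ω : Type*} [m : MeasurableSpace Ω] (μ : Measure Ω) [IsProbabilityMeasure μ]
    (ℱ : Filtration ℕ m) (X : ℕ → Ω → ℝ)
    (hadapt : Adapted ℱ X)
    (hint : ∀ s, Integrable (fun ω => Real.exp (-X s ω)) μ)
    (T : ℕ) (δ : ℝ) (hδ0 : 0 < δ) (hδ1 : δ < 1) :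
    ENNReal.ofReal (1 - δ) ≤
      μ {ω | ∀ t ∈ Finset.Icc 1 T,
        ∑ s ∈ Finset.Icc 1 t,
            (-Real.log ((μ[(fun ω' => Real.exp (-X s ω')) | ℱ (s - 1)]) ω))
          ≤ (∑ s ∈ Finset.Icc 1 t, X s ω) + Real.log (1 / δ)} := by
  classical
  set g : ℕ → Ω → ℝ := fun s => μ[(fun ω' => Real.exp (-X s ω')) | ℱ (s - 1)] with hg_def
  set Z : ℕ → Ω → ℝ :=
    fun t ω => Real.exp (∑ s ∈ Finset.Icc 1 t, (-X s ω - Real.log (g s ω))) with hZ_def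
  have hgm : ∀ s, StronglyMeasurable[ℱ (s - 1)] (g s) := fun s => stronglyMeasurable_condExp
  have hg_pos : ∀ s, ∀ᵐ ω ∂μ, 0 < g s ω := fun s =>
    aux_condexp_pos (ℱ.le _) μ (hint s) (fun ω => Real.exp_pos _)
  -- measurability of Z
  have hZm : ∀ t, StronglyMeasurable[ℱ t] (Z t) := by
    intro t
    refine Measurable.stronglyMeasurable ?_
    refine Real.measurable_exp.comp (Finset.measurable_sum _ fun s hs => ?_)
    have hsle : s ≤ t := (Finset.mem_Icc.mp hs).2
    have h1 : Measurable[ℱ t] (X s) :=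
      Measurable.le (ℱ.mono hsle) (hadapt s)
    have h2 : Measurable[ℱ t] (g s) :=
      ((hgm s).measurable).le (ℱ.mono (le_trans (Nat.sub_le s 1) hsle))
    exact (h1.neg).sub (Real.measurable_log.comp h2)
  have hZnonneg : ∀ t ω, 0 ≤ Z t ω := fun t ω => (Real.exp_pos _).le
  have hZ0 : ∀ ω, Z 0 ω = 1 := by intro ω; simp [hZ_def]
  -- product formula
  have hZsucc : ∀ t, ∀ᵐ ω ∂μ,
      Z (t + 1) ω = (Z t ω / g (t + 1) ω) * Real.exp (-X (t + 1) ω) := by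
    intro t
    filter_upwards [hg_pos (t + 1)] with ω hω
    simp only [hZ_def]
    rw [Finset.sum_Icc_succ_top (Nat.le_add_left 1 t), Real.exp_add, sub_eq_add_neg,
      Real.exp_add, Real.exp_neg (Real.log (g (t + 1) ω)), Real.exp_log hω]
    ring
  -- lintegral of Z is 1
  have hlint : ∀ t, ∫⁻ ω, ENNReal.ofReal (Z t ω) ∂μ = 1 := by
    intro t
    induction t with
    | zero => simp [hZ0]
    | succ t ih =>
      have hφ : Measurable[ℱ t] (fun ω => ENNReal.ofReal (Z t ω / g (t + 1) ω)) :=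
        ((hZm t).measurable.div ((hgm (t + 1)).measurable)).ennreal_ofReal
      calc ∫⁻ ω, ENNReal.ofReal (Z (t + 1) ω) ∂μ
          = ∫⁻ ω, ENNReal.ofReal (Z t ω / g (t + 1) ω)
              * ENNReal.ofReal (Real.exp (-X (t + 1) ω)) ∂μ := by
            refine lintegral_congr_ae ?_
            filter_upwards [hZsucc t, hg_pos (t + 1)] with ω h1 h2
            rw [h1, ENNReal.ofReal_mul (div_nonneg (hZnonneg t ω) h2.le)]
        _ = ∫⁻ ω, ENNReal.ofReal (Z t ω / g (t + 1) ω)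
              * ENNReal.ofReal (g (t + 1) ω) ∂μ :=
            aux_lintegral_condexp (ℱ.le t) μ (hint (t + 1))
              (Filter.Eventually.of_forall fun ω => (Real.exp_pos _).le) hφ
        _ = ∫⁻ ω, ENNReal.ofReal (Z t ω) ∂μ := by
            refine lintegral_congr_ae ?_
            filter_upwards [hg_pos (t + 1)] with ω h2
            rw [← ENNReal.ofReal_mul (div_nonneg (hZnonneg t ω) h2.le),
              div_mul_cancel₀ _ h2.ne']
        _ = 1 := ih
  have hZint : ∀ t, Integrable (Z t) μ := by
    intro t
    refine ⟨((hZm t).mono (ℱ.le t)).aestronglyMeasurable, ?_⟩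
    rw [hasFiniteIntegral_iff_ofReal (Filter.Eventually.of_forall fun ω => hZnonneg t ω)]
    rw [hlint t]
    exact ENNReal.one_lt_top
  -- martingale
  have hmart : Martingale Z ℱ μ := by
    refine martingale_nat (fun t => hZm t) hZint (fun t => ?_)
    have hfmeas : StronglyMeasurable[ℱ t] (fun ω => Z t ω / g (t + 1) ω) :=
      Measurable.stronglyMeasurable ((hZm t).measurable.div ((hgm (t + 1)).measurable))
    have hprod : Integrable ((fun ω => Z t ω / g (t + 1) ω)
        * (fun ω => Real.exp (-X (t + 1) ω))) μ :=
      (hZint (t + 1)).congr (hZsucc t)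
    have h1 : μ[Z (t + 1)|ℱ t] =ᵐ[μ]
        μ[(fun ω => Z t ω / g (t + 1) ω) * (fun ω => Real.exp (-X (t + 1) ω))|ℱ t] :=
      condExp_congr_ae (hZsucc t)
    have h2 := condExp_mul_of_stronglyMeasurable_left hfmeas hprod (hint (t + 1))
    have h3 : (fun ω => Z t ω / g (t + 1) ω) * μ[(fun ω => Real.exp (-X (t + 1) ω))|ℱ t]
        =ᵐ[μ] Z t := by
      filter_upwards [hg_pos (t + 1)] with ω h2'
      show Z t ω / g (t + 1) ω * g (t + 1) ω = Z t ω
      exact div_mul_cancel₀ _ h2'.ne'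
    exact ((h1.trans h2).trans h3).symm
  -- Doob maximal inequality
  set ε : ℝ≥0 := Real.toNNReal δ⁻¹ with hε_def
  have hεcoe : (ε : ℝ) = δ⁻¹ := Real.coe_toNNReal _ (inv_nonneg.mpr hδ0.le)
  set S : Set Ω :=
    {ω | (ε : ℝ) ≤ (Finset.range (T + 1)).sup' Finset.nonempty_range_add_one fun k => Z k ω}
    with hS_def
  have hSmeas : MeasurableSet S :=
    measurableSet_le measurable_const
      (Finset.measurable_range_sup'' fun k _ => ((hZm k).measurable.le (ℱ.le k)))
  have hint_eq : ∫ ω, Z T ω ∂μ = 1 := by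
    rw [integral_eq_lintegral_of_nonneg_ae (Filter.Eventually.of_forall fun ω => hZnonneg T ω)
      ((hZm T).mono (ℱ.le T)).aestronglyMeasurable, hlint T]
    simp
  have hkey : (ε : ℝ≥0∞) * μ S ≤ 1 := by
    have h := maximal_ineq hmart.submartingale (fun t ω => hZnonneg t ω) (ε := ε) T
    refine le_trans h ?_
    have hle : ∫ ω in S, Z T ω ∂μ ≤ 1 := by
      rw [← hint_eq]
      exact setIntegral_le_integral (hZint T)
        (Filter.Eventually.of_forall fun ω => hZnonneg T ω)
    calc ENNReal.ofReal (∫ ω in S, Z T ω ∂μ) ≤ ENNReal.ofReal 1 :=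
          ENNReal.ofReal_le_ofReal hle
      _ = 1 := ENNReal.ofReal_one
  have hεne : (ε : ℝ≥0∞) ≠ 0 := by
    simp only [ne_eq, ENNReal.coe_eq_zero]
    intro h
    rw [h] at hεcoe
    simp at hεcoe
    exact absurd hεcoe (by positivity)
  have hμS : μ S ≤ ENNReal.ofReal δ := by
    have h1 : μ S ≤ (ε : ℝ≥0∞)⁻¹ := by
      rw [ENNReal.le_inv_iff_mul_le, mul_comm]
      exact hkey
    have h2 : (ε : ℝ≥0∞)⁻¹ = ENNReal.ofReal δ := by
      rw [← ENNReal.ofReal_coe_nnreal, hεcoe, ENNReal.ofReal_inv_of_pos hδ0, inv_inv]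
    rwa [h2] at h1
  -- complement of S is in the good set
  have hsubset : Sᶜ ⊆ {ω | ∀ t ∈ Finset.Icc 1 T,
      ∑ s ∈ Finset.Icc 1 t, (-Real.log (g s ω))
        ≤ (∑ s ∈ Finset.Icc 1 t, X s ω) + Real.log (1 / δ)} := by
    intro ω hω t ht
    have htT : t ≤ T := (Finset.mem_Icc.mp ht).2
    have hωS : ¬ ((ε : ℝ) ≤ (Finset.range (T + 1)).sup' Finset.nonempty_range_add_one
        fun k => Z k ω) := hω
    push_neg at hωS
    have hZt : Z t ω < δ⁻¹ := by
      rw [← hεcoe]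
      exact lt_of_le_of_lt
        (Finset.le_sup' (f := fun k => Z k ω) (Finset.mem_range.mpr (Nat.lt_succ_of_le htT)))
        hωS
    have hlog : ∑ s ∈ Finset.Icc 1 t, (-X s ω - Real.log (g s ω)) ≤ Real.log δ⁻¹ := by
      have := hZt.le
      rw [hZ_def] at this
      have h3 : Real.exp (∑ s ∈ Finset.Icc 1 t, (-X s ω - Real.log (g s ω)))
          ≤ Real.exp (Real.log δ⁻¹) := by
        rwa [Real.exp_log (inv_pos.mpr hδ0)]
      exact (Real.exp_le_exp.mp h3)
    have hsplit : ∑ s ∈ Finset.Icc 1 t, (-X s ω - Real.log (g s ω))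
        = (∑ s ∈ Finset.Icc 1 t, (-Real.log (g s ω))) - ∑ s ∈ Finset.Icc 1 t, X s ω := by
      rw [← Finset.sum_sub_distrib]
      exact Finset.sum_congr rfl fun s _ => by ring
    rw [hsplit] at hlog
    rw [one_div]
    linarith
  calc ENNReal.ofReal (1 - δ) = 1 - ENNReal.ofReal δ := by
        rw [ENNReal.ofReal_sub _ hδ0.le, ENNReal.ofReal_one]
    _ ≤ 1 - μ S := tsub_le_tsub_left hμS 1
    _ = μ Sᶜ := by
        rw [measure_compl hSmeas (measure_ne_top μ S)]
        simp
    _ ≤ _ := measure_mono hsubset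
end

section
/- Generalized l2-Eluder argument (single-index, constant-beta case): Suppose x_1, ..., x_K in R^d satisfy ||x_k||_2 <= R_x, and f_1, ..., f_K : R^d -> R are of the form f_k(x) = max_{r} sum_{j=1}^J |<x, y_{k,j,r}>| with max_{k,r} sum_j ||y_{k,j,r}||_2 <= R_y. If for every k in [K], sum_{t=1}^{k-1} f_k(x_t)^2 <= beta, then for any M > 0, sum_{t=1}^K min{M, f_t(x_t)} <= sqrt( 2 d (M^2 K + beta K) log( 1 + (K/d) R_x^2 R_y^2 / M^2 ) ). -/
open Finset Matrix

/-- The function `f_k(x) = max_{r ∈ R} ∑_{j=1}^J |⟨x, y_{k,j,r}⟩|`. -/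
noncomputable def maxAbsSumInner' {R : Type*} [Fintype R] [Nonempty R] {d J : ℕ}
    (y : Fin J → R → Fin d → ℝ) (v : Fin d → ℝ) : ℝ :=
  Finset.univ.sup' Finset.univ_nonempty (fun r => ∑ j, |v ⬝ᵥ y j r|)

namespace EluderAux

variable {d : ℕ}

lemma star_pi (v : Fin d → ℝ) : star v = v := funext fun _ => rfl

lemma vecMulVec_mulVec' (v w : Fin d → ℝ) :
    vecMulVec v v *ᵥ w = (v ⬝ᵥ w) • v := by
  ext i
  simp [vecMulVec_apply, mulVec, dotProduct, Finset.mul_sum, mul_comm, mul_left_comm]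

lemma quad_vecMulVec (v w : Fin d → ℝ) :
    w ⬝ᵥ (vecMulVec v v *ᵥ w) = (v ⬝ᵥ w) ^ 2 := by
  rw [vecMulVec_mulVec', dotProduct_smul]
  rw [dotProduct_comm]
  rw [smul_eq_mul, sq]

lemma posSemidef_vecMulVec (v : Fin d → ℝ) : (vecMulVec v v).PosSemidef := by
  refine .of_dotProduct_mulVec_nonneg ?_ ?_
  · ext i j
    simp [conjTranspose_apply, vecMulVec_apply, mul_comm]
  · intro w
    rw [star_pi, quad_vecMulVec]
    positivity

lemma transpose_eq_self_of_isHermitian {A : Matrix (Fin d) (Fin d) ℝ}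
    (hA : A.IsHermitian) : Aᵀ = A := by
  have h : Aᴴ = A := hA
  ext i j
  rw [Matrix.transpose_apply]
  conv_rhs => rw [← h, Matrix.conjTranspose_apply, star_trivial]

lemma dot_shift (M : Matrix (Fin d) (Fin d) ℝ) (u w : Fin d → ℝ) :
    (M *ᵥ u) ⬝ᵥ w = u ⬝ᵥ (Mᵀ *ᵥ w) := by
  rw [dotProduct_comm, dotProduct_mulVec, ← mulVec_transpose, dotProduct_comm]

lemma sum_mulVec {ι : Type*} (s : Finset ι) (f : ι → Matrix (Fin d) (Fin d) ℝ)
    (w : Fin d → ℝ) : (∑ t ∈ s, f t) *ᵥ w = ∑ t ∈ s, f t *ᵥ w := by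
  ext i
  simp only [Matrix.mulVec, dotProduct, Finset.sum_apply, Matrix.sum_apply,
    Finset.sum_mul]
  rw [Finset.sum_comm]

lemma dotProduct_sum' {ι : Type*} (s : Finset ι) (w : Fin d → ℝ)
    (g : ι → Fin d → ℝ) : w ⬝ᵥ (∑ t ∈ s, g t) = ∑ t ∈ s, w ⬝ᵥ g t := by
  simp only [dotProduct, Finset.sum_apply, Finset.mul_sum]
  rw [Finset.sum_comm]

open scoped MatrixOrder in
/-- Cauchy–Schwarz with respect to a positive definite matrix. -/
lemma dotProduct_sq_le {A : Matrix (Fin d) (Fin d) ℝ} (hA : A.PosDef)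
    (a b : Fin d → ℝ) :
    (a ⬝ᵥ b) ^ 2 ≤ (a ⬝ᵥ (A⁻¹ *ᵥ a)) * (b ⬝ᵥ (A *ᵥ b)) := by
  classical
  set S := CFC.sqrt A with hSdef
  have hS : S.PosSemidef := Matrix.nonneg_iff_posSemidef.mp (CFC.sqrt_nonneg A)
  have hSS : S * S = A := CFC.sqrt_mul_sqrt_self A hA.posSemidef.nonneg
  have hdet : IsUnit S.det := by
    refine isUnit_iff_ne_zero.mpr fun h => ?_
    have h2 : S.det * S.det = A.det := by rw [← Matrix.det_mul, hSS]
    rw [h, mul_zero] at h2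
    exact absurd h2.symm (ne_of_gt hA.det_pos)
  have hSsymm : Sᵀ = S := transpose_eq_self_of_isHermitian hS.isHermitian
  have h1 : S * S⁻¹ = 1 := Matrix.mul_nonsing_inv _ hdet
  have h2 : S⁻¹ * S = 1 := Matrix.nonsing_inv_mul _ hdet
  have hAinv : S⁻¹ * S⁻¹ = A⁻¹ := by rw [← Matrix.mul_inv_rev, hSS]
  have hSinvsymm : (S⁻¹)ᵀ = S⁻¹ := by rw [Matrix.transpose_nonsing_inv, hSsymm]
  set c := S⁻¹ *ᵥ a with hc
  set e := S *ᵥ b with he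
  have hce : c ⬝ᵥ e = a ⬝ᵥ b := by
    rw [hc, he, dot_shift, hSinvsymm, Matrix.mulVec_mulVec, h2, Matrix.one_mulVec]
  have hcc : c ⬝ᵥ c = a ⬝ᵥ (A⁻¹ *ᵥ a) := by
    rw [hc, dot_shift, hSinvsymm, Matrix.mulVec_mulVec, hAinv]
  have hee : e ⬝ᵥ e = b ⬝ᵥ (A *ᵥ b) := by
    rw [he, dot_shift, hSsymm, Matrix.mulVec_mulVec, hSS]
  rw [← hce, ← hcc, ← hee]
  have hCS := Finset.sum_mul_sq_le_sq_mul_sq Finset.univ c e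
  calc (c ⬝ᵥ e) ^ 2 = (∑ i, c i * e i) ^ 2 := rfl
    _ ≤ (∑ i, c i ^ 2) * ∑ i, e i ^ 2 := hCS
    _ = (c ⬝ᵥ c) * (e ⬝ᵥ e) := by simp [dotProduct, sq]

/-- The matrix determinant lemma for a rank one update of a posdef matrix. -/
lemma det_add_vecMulVec {A : Matrix (Fin d) (Fin d) ℝ} (hA : A.PosDef)
    (v : Fin d → ℝ) :
    (A + vecMulVec v v).det = A.det * (1 + v ⬝ᵥ (A⁻¹ *ᵥ v)) := by
  classical
  have hU : IsUnit A.det := isUnit_iff_ne_zero.mpr (ne_of_gt hA.det_pos)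
  have hfact : A + vecMulVec v v
      = A * (1 + replicateCol (Fin 1) (A⁻¹ *ᵥ v) * replicateRow (Fin 1) v) := by
    rw [Matrix.mul_add, Matrix.mul_one]
    congr 1
    rw [← Matrix.mul_assoc, ← Matrix.replicateCol_mulVec, Matrix.mulVec_mulVec,
      Matrix.mul_nonsing_inv _ hU, Matrix.one_mulVec, vecMulVec_eq (Fin 1)]
    rfl
  rw [hfact, Matrix.det_mul]
  erw [Matrix.det_one_add_replicateCol_mul_replicateRow]

/-- AM-GM: determinant of a PSD matrix is at most `(trace/d)^d`. -/
lemma det_le_trace_div_pow {A : Matrix (Fin d) (Fin d) ℝ} (hd : 0 < d)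
    (hA : A.PosSemidef) : A.det ≤ (A.trace / d) ^ d := by
  classical
  have hH : A.IsHermitian := hA.isHermitian
  have hev : ∀ i, 0 ≤ hH.eigenvalues i := hA.eigenvalues_nonneg
  have hdet : A.det = ∏ i, hH.eigenvalues i := by
    simpa using hH.det_eq_prod_eigenvalues
  have htr : A.trace = ∑ i, hH.eigenvalues i := by
    simpa using hH.trace_eq_sum_eigenvalues
  have hd' : (d : ℝ) ≠ 0 := Nat.cast_ne_zero.mpr hd.ne'
  have hgm := Real.geom_mean_le_arith_mean_weighted Finset.univ
      (fun _ => 1 / (d : ℝ)) hH.eigenvalues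
      (fun i _ => by positivity)
      (by simp [Finset.card_univ]; field_simp)
      (fun i _ => hev i)
  have hsum : ∑ i, (1 / (d : ℝ)) * hH.eigenvalues i = A.trace / d := by
    rw [htr, ← Finset.mul_sum]
    ring
  rw [hsum] at hgm
  have hprod : ∏ i, hH.eigenvalues i
      = (∏ i, hH.eigenvalues i ^ (1 / (d : ℝ))) ^ d := by
    rw [← Finset.prod_pow]
    refine Finset.prod_congr rfl fun i _ => ?_
    rw [← Real.rpow_natCast (hH.eigenvalues i ^ (1 / (d : ℝ))) d,
      ← Real.rpow_mul (hev i)]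
    rw [one_div, inv_mul_cancel₀ hd', Real.rpow_one]
  rw [hdet, hprod]
  exact pow_le_pow_left₀ (Finset.prod_nonneg fun i _ => Real.rpow_nonneg (hev i) _)
    hgm d

lemma min_one_le_two_mul_log {u : ℝ} (hu : 0 ≤ u) :
    min 1 u ≤ 2 * Real.log (1 + u) := by
  have h1u : (0 : ℝ) < 1 + u := by linarith
  have hlog : u / (1 + u) ≤ Real.log (1 + u) := by
    have h := Real.log_le_sub_one_of_pos (x := (1 + u)⁻¹) (by positivity)
    rw [Real.log_inv] at h
    have h2 : 1 - (1 + u)⁻¹ ≤ Real.log (1 + u) := by linarith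
    have h3 : u / (1 + u) = 1 - (1 + u)⁻¹ := by field_simp; ring
    linarith
  rcases le_total u 1 with h | h
  · rw [min_eq_right h]
    have h2 : u * (1 + u) ≤ 2 * u := by nlinarith
    have h4 : u ≤ 2 * (u / (1 + u)) := by
      rw [mul_div_assoc', le_div_iff₀ h1u]
      linarith
    linarith
  · rw [min_eq_left h]
    have h2 : Real.log 2 ≤ Real.log (1 + u) :=
      Real.log_le_log (by norm_num) (by linarith)
    have h3 := Real.log_two_gt_d9
    linarith

lemma dotProduct_self_nonneg' (v : Fin d → ℝ) : 0 ≤ v ⬝ᵥ v :=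
  Finset.sum_nonneg fun i _ => mul_self_nonneg _

/-- The elliptical potential argument. -/
lemma elliptical (d K : ℕ) (hd : 0 < d) (hK : 1 ≤ K)
    (x u : ℕ → Fin d → ℝ) (Rx Ry β M : ℝ)
    (hβ : 0 ≤ β) (hM : 0 < M) (hRy : 0 < Ry)
    (hx : ∀ k ∈ Finset.Icc 1 K, x k ⬝ᵥ x k ≤ Rx ^ 2)
    (hu : ∀ k ∈ Finset.Icc 1 K, u k ⬝ᵥ u k ≤ Ry ^ 2)
    (hpos : ∀ k ∈ Finset.Icc 1 K, 0 ≤ x k ⬝ᵥ u k)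
    (hpre : ∀ k ∈ Finset.Icc 1 K,
      ∑ t ∈ Finset.Ico 1 k, (x t ⬝ᵥ u k) ^ 2 ≤ β) :
    ∑ t ∈ Finset.Icc 1 K, min M (x t ⬝ᵥ u t)
      ≤ Real.sqrt (2 * d * (M ^ 2 * K + β * K) *
          Real.log (1 + ((K : ℝ) / d) * Rx ^ 2 * Ry ^ 2 / M ^ 2)) := by
  classical
  set l : ℝ := M ^ 2 / Ry ^ 2 with hl
  have hl0 : 0 < l := by positivity
  have hRx2 : 0 ≤ Rx ^ 2 := sq_nonneg _
  set Λ : ℕ → Matrix (Fin d) (Fin d) ℝ := fun k =>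
    l • (1 : Matrix (Fin d) (Fin d) ℝ) + ∑ t ∈ Finset.Ico 1 k, vecMulVec (x t) (x t)
    with hΛ
  have hΛpd : ∀ k, (Λ k).PosDef := by
    intro k
    have h1 : (l • (1 : Matrix (Fin d) (Fin d) ℝ)).PosDef := by
      rw [smul_one_eq_diagonal]
      exact Matrix.PosDef.diagonal fun _ => hl0
    have h2 : (∑ t ∈ Finset.Ico 1 k, vecMulVec (x t) (x t)).PosSemidef :=
      Finset.sum_induction _ _ (fun a b ha hb => ha.add hb) Matrix.PosSemidef.zero
        (fun t _ => posSemidef_vecMulVec (x t))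
    exact h1.add_posSemidef h2
  have hquad : ∀ k (w : Fin d → ℝ),
      w ⬝ᵥ (Λ k *ᵥ w) = l * (w ⬝ᵥ w) + ∑ t ∈ Finset.Ico 1 k, (x t ⬝ᵥ w) ^ 2 := by
    intro k w
    rw [hΛ]
    rw [Matrix.add_mulVec, dotProduct_add, Matrix.smul_mulVec,
      Matrix.one_mulVec, dotProduct_smul, smul_eq_mul]
    congr 1
    rw [sum_mulVec, dotProduct_sum']
    exact Finset.sum_congr rfl fun t _ => quad_vecMulVec (x t) w
  set q : ℕ → ℝ := fun k => x k ⬝ᵥ ((Λ k)⁻¹ *ᵥ x k) with hqdef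
  have hq0 : ∀ k, 0 ≤ q k := by
    intro k
    have h := ((hΛpd k).inv).posSemidef.dotProduct_mulVec_nonneg (x k)
    rwa [star_pi] at h
  have hdetpos : ∀ k, 0 < (Λ k).det := fun k => (hΛpd k).det_pos
  have hdetrec : ∀ k, 1 ≤ k → (Λ (k + 1)).det = (Λ k).det * (1 + q k) := by
    intro k hk
    have hstep : Λ (k + 1) = Λ k + vecMulVec (x k) (x k) := by
      rw [hΛ]
      simp only
      rw [Finset.sum_Ico_succ_top hk, add_assoc]
    rw [hstep, det_add_vecMulVec (hΛpd k)]
  set G : ℕ → ℝ := fun k => Real.log (Λ k).det with hG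
  have hGdiff : ∀ k ∈ Finset.Icc 1 K, Real.log (1 + q k) = G (k + 1) - G k := by
    intro k hk
    have hk1 : 1 ≤ k := (Finset.mem_Icc.mp hk).1
    rw [hG]
    simp only
    rw [hdetrec k hk1, Real.log_mul (ne_of_gt (hdetpos k))
      (by have := hq0 k; positivity)]
    ring
  have htel : ∑ k ∈ Finset.Icc 1 K, Real.log (1 + q k) = G (K + 1) - G 1 := by
    rw [Finset.sum_congr rfl hGdiff]
    rw [← Finset.Ico_add_one_right_eq_Icc, Finset.sum_Ico_eq_sum_range]
    simp only [Nat.add_sub_cancel]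
    have h := Finset.sum_range_sub (fun i => G (1 + i)) K
    rw [show K + 1 = 1 + K from Nat.add_comm K 1]
    exact h
  have hG1 : G 1 = d * Real.log l := by
    rw [hG]
    simp only
    rw [hΛ]
    simp only [Finset.Ico_self, Finset.sum_empty, add_zero]
    rw [Matrix.det_smul, Matrix.det_one, mul_one]
    simp [Real.log_pow]
  have htrace : (Λ (K + 1)).trace ≤ l * d + K * Rx ^ 2 := by
    rw [hΛ]
    simp only
    rw [Matrix.trace_add, Matrix.trace_smul, Matrix.trace_one, Matrix.trace_sum]
    have h1 : ∀ t ∈ Finset.Ico 1 (K + 1), (vecMulVec (x t) (x t)).trace ≤ Rx ^ 2 := by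
      intro t ht
      have ht' : t ∈ Finset.Icc 1 K := by
        rw [← Finset.Ico_add_one_right_eq_Icc]; exact ht
      have he : (vecMulVec (x t) (x t)).trace = x t ⬝ᵥ x t := by
        simp [Matrix.trace, Matrix.diag, vecMulVec_apply, dotProduct]
      rw [he]
      exact hx t ht'
    have h2 : ∑ t ∈ Finset.Ico 1 (K + 1), (vecMulVec (x t) (x t)).trace
        ≤ (K : ℝ) * Rx ^ 2 := by
      calc ∑ t ∈ Finset.Ico 1 (K + 1), (vecMulVec (x t) (x t)).trace
          ≤ ∑ t ∈ Finset.Ico 1 (K + 1), Rx ^ 2 := Finset.sum_le_sum h1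
        _ = (K : ℝ) * Rx ^ 2 := by
            rw [Finset.sum_const, Nat.card_Ico]
            simp [Nat.add_sub_cancel]
    simp only [smul_eq_mul, Fintype.card_fin] at *
    linarith
  have htrace0 : l * (d : ℝ) ≤ (Λ (K + 1)).trace := by
    rw [hΛ]
    simp only
    rw [Matrix.trace_add, Matrix.trace_smul, Matrix.trace_one, Matrix.trace_sum]
    have h1 : 0 ≤ ∑ t ∈ Finset.Ico 1 (K + 1), (vecMulVec (x t) (x t)).trace := by
      refine Finset.sum_nonneg fun t _ => ?_
      have he : (vecMulVec (x t) (x t)).trace = x t ⬝ᵥ x t := by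
        simp [Matrix.trace, Matrix.diag, vecMulVec_apply, dotProduct]
      rw [he]
      exact dotProduct_self_nonneg' _
    simp only [smul_eq_mul, Fintype.card_fin]
    linarith
  have hd' : (0 : ℝ) < d := Nat.cast_pos.mpr hd
  have hGK : G (K + 1) ≤ d * Real.log (l + K * Rx ^ 2 / d) := by
    have hdet_le := det_le_trace_div_pow hd (hΛpd (K + 1)).posSemidef
    have htr_div : (Λ (K + 1)).trace / d ≤ l + K * Rx ^ 2 / d := by
      rw [div_le_iff₀ hd']
      have he : (l + (K : ℝ) * Rx ^ 2 / d) * d = l * d + K * Rx ^ 2 := by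
        field_simp
      rw [he]
      exact htrace
    have htr_pos : 0 < (Λ (K + 1)).trace / d := by
      apply div_pos _ hd'
      calc (0 : ℝ) < l * d := by positivity
        _ ≤ _ := htrace0
    have hpow : (Λ (K + 1)).det ≤ (l + K * Rx ^ 2 / d) ^ d :=
      hdet_le.trans (pow_le_pow_left₀ htr_pos.le htr_div d)
    rw [hG]
    simp only
    calc Real.log (Λ (K + 1)).det ≤ Real.log ((l + K * Rx ^ 2 / d) ^ d) :=
          Real.log_le_log (hdetpos _) hpow
      _ = d * Real.log (l + K * Rx ^ 2 / d) := by rw [Real.log_pow]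
  set L : ℝ := Real.log (1 + ((K : ℝ) / d) * Rx ^ 2 * Ry ^ 2 / M ^ 2) with hL
  have hlogeq : Real.log (l + K * Rx ^ 2 / d) - Real.log l = L := by
    rw [← Real.log_div (by positivity) (ne_of_gt hl0), hL]
    congr 1
    rw [hl]
    field_simp
  have hsum_min_q : ∑ k ∈ Finset.Icc 1 K, min 1 (q k) ≤ 2 * (d * L) := by
    calc ∑ k ∈ Finset.Icc 1 K, min 1 (q k)
        ≤ ∑ k ∈ Finset.Icc 1 K, 2 * Real.log (1 + q k) :=
          Finset.sum_le_sum fun k _ => min_one_le_two_mul_log (hq0 k)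
      _ = 2 * (G (K + 1) - G 1) := by rw [← Finset.mul_sum, htel]
      _ ≤ 2 * (d * Real.log (l + K * Rx ^ 2 / d) - d * Real.log l) := by
          have := hGK
          rw [hG1]
          linarith
      _ = 2 * (d * L) := by
          rw [← hlogeq]; ring
  have hpoint : ∀ k ∈ Finset.Icc 1 K,
      (min M (x k ⬝ᵥ u k)) ^ 2 ≤ (M ^ 2 + β) * min 1 (q k) := by
    intro k hk
    have hmin_sq : (min M (x k ⬝ᵥ u k)) ^ 2 = min (M ^ 2) ((x k ⬝ᵥ u k) ^ 2) := by
      rcases le_total M (x k ⬝ᵥ u k) with h | h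
      · rw [min_eq_left h, min_eq_left (by nlinarith [hpos k hk])]
      · rw [min_eq_right h, min_eq_right (by nlinarith [hpos k hk])]
    have hcs := dotProduct_sq_le (hΛpd k) (x k) (u k)
    have hquad_u : u k ⬝ᵥ (Λ k *ᵥ u k) ≤ M ^ 2 + β := by
      rw [hquad k (u k)]
      have h1 : l * (u k ⬝ᵥ u k) ≤ l * Ry ^ 2 :=
        mul_le_mul_of_nonneg_left (hu k hk) hl0.le
      have h2 : l * Ry ^ 2 = M ^ 2 := by
        rw [hl]; field_simp
      have h3 : ∑ t ∈ Finset.Ico 1 k, (x t ⬝ᵥ u k) ^ 2 ≤ β := hpre k hk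
      linarith
    have hfq : (x k ⬝ᵥ u k) ^ 2 ≤ (M ^ 2 + β) * q k := by
      calc (x k ⬝ᵥ u k) ^ 2 ≤ q k * (u k ⬝ᵥ (Λ k *ᵥ u k)) := hcs
        _ ≤ q k * (M ^ 2 + β) := mul_le_mul_of_nonneg_left hquad_u (hq0 k)
        _ = (M ^ 2 + β) * q k := mul_comm _ _
    rw [hmin_sq]
    rcases le_total (q k) 1 with h | h
    · rw [min_eq_right h]
      exact le_trans (min_le_right _ _) hfq
    · rw [min_eq_left h]
      calc min (M ^ 2) ((x k ⬝ᵥ u k) ^ 2) ≤ M ^ 2 := min_le_left _ _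
        _ ≤ (M ^ 2 + β) * 1 := by linarith
  have hsq : (∑ t ∈ Finset.Icc 1 K, min M (x t ⬝ᵥ u t)) ^ 2
      ≤ 2 * d * (M ^ 2 * K + β * K) * L := by
    calc (∑ t ∈ Finset.Icc 1 K, min M (x t ⬝ᵥ u t)) ^ 2
        ≤ (Finset.Icc 1 K).card * ∑ t ∈ Finset.Icc 1 K, (min M (x t ⬝ᵥ u t)) ^ 2 :=
          sq_sum_le_card_mul_sum_sq
      _ ≤ (Finset.Icc 1 K).card * ∑ t ∈ Finset.Icc 1 K, (M ^ 2 + β) * min 1 (q t) := by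
          apply mul_le_mul_of_nonneg_left (Finset.sum_le_sum hpoint)
          positivity
      _ = (K : ℝ) * ((M ^ 2 + β) * ∑ t ∈ Finset.Icc 1 K, min 1 (q t)) := by
          rw [Nat.card_Icc, ← Finset.mul_sum]
          simp [Nat.add_sub_cancel]
      _ ≤ (K : ℝ) * ((M ^ 2 + β) * (2 * (d * L))) := by
          apply mul_le_mul_of_nonneg_left _ (Nat.cast_nonneg K)
          apply mul_le_mul_of_nonneg_left hsum_min_q
          positivity
      _ = 2 * d * (M ^ 2 * K + β * K) * L := by ring
  exact Real.le_sqrt_of_sq_le hsq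

end EluderAux

/-- Generalized ℓ₂-Eluder argument, single-index constant-β case:
if `‖x_k‖₂ ≤ R_x`, `max_{k,r} ∑_j ‖y_{k,j,r}‖₂ ≤ R_y`, and for every `k ∈ [K]`
`∑_{t<k} f_k(x_t)² ≤ β`, then for any `M > 0`,
`∑_{t=1}^K min{M, f_t(x_t)} ≤ √(2 d (M² K + β K) log(1 + (K/d) R_x² R_y² / M²))`. -/
theorem generalized_l2_eluder
    {R : Type*} [Fintype R] [Nonempty R]
    (d K J : ℕ) (hd : 0 < d)
    (x : ℕ → Fin d → ℝ) (y : ℕ → Fin J → R → Fin d → ℝ)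
    (Rx Ry β M : ℝ) (hβ : 0 ≤ β) (hM : 0 < M)
    (hx : ∀ k ∈ Finset.Icc 1 K, Real.sqrt (∑ i, (x k i) ^ 2) ≤ Rx)
    (hy : ∀ k ∈ Finset.Icc 1 K, ∀ r : R, ∑ j, Real.sqrt (∑ i, (y k j r i) ^ 2) ≤ Ry)
    (hpre : ∀ k ∈ Finset.Icc 1 K,
      ∑ t ∈ Finset.Ico 1 k, (maxAbsSumInner' (y k) (x t)) ^ 2 ≤ β) :
    ∑ t ∈ Finset.Icc 1 K, min M (maxAbsSumInner' (y t) (x t))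
      ≤ Real.sqrt (2 * d * (M ^ 2 * K + β * K) *
          Real.log (1 + ((K : ℝ) / d) * Rx ^ 2 * Ry ^ 2 / M ^ 2)) := by
  classical
  rcases Nat.eq_zero_or_pos K with hK0 | hK
  · subst hK0
    rw [show Finset.Icc 1 0 = (∅ : Finset ℕ) by rfl, Finset.sum_empty]
    exact Real.sqrt_nonneg _
  rcases le_or_gt Ry 0 with hRy | hRy
  · -- degenerate case: all y vanish on the relevant range
    have hzero : ∀ t ∈ Finset.Icc 1 K, maxAbsSumInner' (y t) (x t) = 0 := by
      intro t ht
      have hy0 : ∀ (j : Fin J) (r : R), x t ⬝ᵥ y t j r = 0 := by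
        intro j r
        have h1 := hy t ht r
        have h2 : ∀ j' : Fin J, (0:ℝ) ≤ Real.sqrt (∑ i, (y t j' r i) ^ 2) :=
          fun j' => Real.sqrt_nonneg _
        have h3 : Real.sqrt (∑ i, (y t j r i) ^ 2) = 0 := by
          have hle : Real.sqrt (∑ i, (y t j r i) ^ 2)
              ≤ ∑ j', Real.sqrt (∑ i, (y t j' r i) ^ 2) :=
            Finset.single_le_sum (fun j' _ => h2 j') (Finset.mem_univ j)
          have h7 : Real.sqrt (∑ i, (y t j r i) ^ 2) ≤ 0 := by linarith
          linarith [Real.sqrt_nonneg (∑ i, (y t j r i) ^ 2)]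
        have h4 : ∑ i, (y t j r i) ^ 2 = 0 := by
          have h5 : (0:ℝ) ≤ ∑ i, (y t j r i) ^ 2 :=
            Finset.sum_nonneg fun i _ => sq_nonneg _
          nlinarith [Real.sq_sqrt h5, h3]
        have h6 : ∀ i, y t j r i = 0 := by
          intro i
          have h8 := (Finset.sum_eq_zero_iff_of_nonneg
            (fun i _ => sq_nonneg (y t j r i))).mp h4 i (Finset.mem_univ i)
          exact pow_eq_zero_iff (n := 2) (by norm_num) |>.mp h8
        simp [dotProduct, h6]
      rw [maxAbsSumInner']
      rw [show (fun r => ∑ j, |x t ⬝ᵥ y t j r|) = fun _ => (0:ℝ) by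
        funext r
        refine Finset.sum_eq_zero fun j _ => ?_
        rw [hy0 j r, abs_zero]]
      exact Finset.sup'_const _ 0
    have hLHS : ∑ t ∈ Finset.Icc 1 K, min M (maxAbsSumInner' (y t) (x t)) = 0 := by
      refine Finset.sum_eq_zero fun t ht => ?_
      rw [hzero t ht, min_eq_right hM.le]
    rw [hLHS]
    exact Real.sqrt_nonneg _
  -- main case
  have hchoice : ∀ k, ∃ r : R,
      maxAbsSumInner' (y k) (x k) = ∑ j, |x k ⬝ᵥ y k j r| := by
    intro k
    obtain ⟨r, _, hr⟩ := Finset.exists_mem_eq_sup' Finset.univ_nonempty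
      (fun r => ∑ j, |x k ⬝ᵥ y k j r|)
    exact ⟨r, hr⟩
  choose rs hrs using hchoice
  set ε : ℕ → Fin J → ℝ := fun k j =>
    if 0 ≤ x k ⬝ᵥ y k j (rs k) then 1 else -1 with hε
  set u : ℕ → Fin d → ℝ := fun k i => ∑ j, ε k j * y k j (rs k) i with hu
  have hεsq : ∀ k j, (ε k j) ^ 2 = 1 := by
    intro k j
    rw [hε]
    simp only
    split_ifs <;> norm_num
  have hdot : ∀ t k, x t ⬝ᵥ u k = ∑ j, ε k j * (x t ⬝ᵥ y k j (rs k)) := by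
    intro t k
    rw [hu]
    simp only [dotProduct, Finset.mul_sum]
    rw [Finset.sum_comm]
    refine Finset.sum_congr rfl fun j _ => ?_
    exact Finset.sum_congr rfl fun i _ => by ring
  have hdiag : ∀ k, x k ⬝ᵥ u k = maxAbsSumInner' (y k) (x k) := by
    intro k
    rw [hdot k k, hrs k]
    refine Finset.sum_congr rfl fun j _ => ?_
    rw [hε]
    simp only
    split_ifs with h
    · rw [one_mul, abs_of_nonneg h]
    · rw [neg_one_mul, abs_of_neg (lt_of_not_ge h)]
  have habs : ∀ t k, |x t ⬝ᵥ u k| ≤ maxAbsSumInner' (y k) (x t) := by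
    intro t k
    rw [hdot t k]
    calc |∑ j, ε k j * (x t ⬝ᵥ y k j (rs k))|
        ≤ ∑ j, |ε k j * (x t ⬝ᵥ y k j (rs k))| := Finset.abs_sum_le_sum_abs _ _
      _ = ∑ j, |x t ⬝ᵥ y k j (rs k)| := by
          refine Finset.sum_congr rfl fun j _ => ?_
          rw [abs_mul]
          have hone : |ε k j| = 1 := by
            rw [hε]; simp only; split_ifs <;> norm_num
          rw [hone, one_mul]
      _ ≤ maxAbsSumInner' (y k) (x t) :=
          Finset.le_sup' (fun r => ∑ j, |x t ⬝ᵥ y k j r|) (Finset.mem_univ (rs k))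
  have hfnonneg : ∀ t k, 0 ≤ maxAbsSumInner' (y k) (x t) := by
    intro t k
    calc (0:ℝ) ≤ |x t ⬝ᵥ u k| := abs_nonneg _
      _ ≤ _ := habs t k
  have hx' : ∀ k ∈ Finset.Icc 1 K, x k ⬝ᵥ x k ≤ Rx ^ 2 := by
    intro k hk
    have h1 := hx k hk
    have h2 : (0:ℝ) ≤ ∑ i, (x k i) ^ 2 := Finset.sum_nonneg fun i _ => sq_nonneg _
    have h3 : x k ⬝ᵥ x k = ∑ i, (x k i) ^ 2 := by simp [dotProduct, sq]
    rw [h3]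
    nlinarith [Real.sq_sqrt h2, Real.sqrt_nonneg (∑ i, (x k i) ^ 2)]
  have hu' : ∀ k ∈ Finset.Icc 1 K, u k ⬝ᵥ u k ≤ Ry ^ 2 := by
    intro k hk
    set v : Fin J → EuclideanSpace ℝ (Fin d) := fun j =>
      (WithLp.equiv 2 (Fin d → ℝ)).symm (fun i => ε k j * y k j (rs k) i) with hv
    have hnorm_v : ∀ j, ‖v j‖ = Real.sqrt (∑ i, (y k j (rs k) i) ^ 2) := by
      intro j
      rw [EuclideanSpace.norm_eq]
      congr 1
      refine Finset.sum_congr rfl fun i _ => ?_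
      rw [hv]
      simp only [Real.norm_eq_abs, sq_abs, WithLp.equiv_symm_apply, PiLp.toLp_apply]
      rw [mul_pow, hεsq k j, one_mul]
    have hsum_v : ∀ i, (∑ j, v j) i = u k i := by
      intro i
      rw [hu]
      simp only
      rw [WithLp.ofLp_sum, Finset.sum_apply]
      rfl
    have hnorm_sum : ‖∑ j, v j‖ = Real.sqrt (∑ i, (u k i) ^ 2) := by
      rw [EuclideanSpace.norm_eq]
      congr 1
      refine Finset.sum_congr rfl fun i _ => ?_
      rw [hsum_v i, Real.norm_eq_abs, sq_abs]
    have htri : ‖∑ j, v j‖ ≤ ∑ j, ‖v j‖ := norm_sum_le _ _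
    have hRy' : ∑ j, ‖v j‖ ≤ Ry := by
      calc ∑ j, ‖v j‖ = ∑ j, Real.sqrt (∑ i, (y k j (rs k) i) ^ 2) :=
            Finset.sum_congr rfl fun j _ => hnorm_v j
        _ ≤ Ry := hy k hk (rs k)
    have h2 : Real.sqrt (∑ i, (u k i) ^ 2) ≤ Ry := by
      rw [← hnorm_sum]; linarith
    have h3 : (0:ℝ) ≤ ∑ i, (u k i) ^ 2 := Finset.sum_nonneg fun i _ => sq_nonneg _
    have h4 : u k ⬝ᵥ u k = ∑ i, (u k i) ^ 2 := by simp [dotProduct, sq]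
    rw [h4]
    nlinarith [Real.sq_sqrt h3, Real.sqrt_nonneg (∑ i, (u k i) ^ 2)]
  have hpos' : ∀ k ∈ Finset.Icc 1 K, 0 ≤ x k ⬝ᵥ u k := by
    intro k _
    rw [hdiag k]
    exact hfnonneg k k
  have hpre' : ∀ k ∈ Finset.Icc 1 K,
      ∑ t ∈ Finset.Ico 1 k, (x t ⬝ᵥ u k) ^ 2 ≤ β := by
    intro k hk
    refine le_trans (Finset.sum_le_sum fun t _ => ?_) (hpre k hk)
    calc (x t ⬝ᵥ u k) ^ 2 = |x t ⬝ᵥ u k| ^ 2 := (sq_abs _).symm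
      _ ≤ (maxAbsSumInner' (y k) (x t)) ^ 2 :=
          pow_le_pow_left₀ (abs_nonneg _) (habs t k) 2
  have hmain := EluderAux.elliptical d K hd hK x u Rx Ry β M hβ hM hRy
    hx' hu' hpos' hpre'
  calc ∑ t ∈ Finset.Icc 1 K, min M (maxAbsSumInner' (y t) (x t))
      = ∑ t ∈ Finset.Icc 1 K, min M (x t ⬝ᵥ u t) := by
        refine Finset.sum_congr rfl fun t _ => ?_
        rw [hdiag t]
    _ ≤ _ := hmain
end

section
/- Linear l2-Eluder bound: Let x_1,...,x_K and y_1,...,y_K be vectors in R^d with ||x_k||_2 <= R_x and ||y_k||_2 <= R_y. If for every k, sum_{t < k} <x_t, y_k>^2 <= beta, then sum_{t=1}^K min{1, |<x_t, y_t>|} <= sqrt( 2 d K (1 + beta) log( 1 + (K/d) R_x^2 R_y^2 ) ). -/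
open Finset Matrix

variable {d : ℕ}

lemma min_le_two_log (a : ℝ) (ha : 0 ≤ a) : min 1 a ≤ 2 * Real.log (1 + a) := by
  rcases le_total a 1 with h | h
  · rw [min_eq_right h]
    have h1 : (0:ℝ) < 1 + a := by linarith
    have h2 := Real.log_le_sub_one_of_pos (x := (1+a)⁻¹) (by positivity)
    rw [Real.log_inv] at h2
    have hlog : a / (1 + a) ≤ Real.log (1 + a) := by
      have h3 : (1+a)⁻¹ - 1 = -(a/(1+a)) := by field_simp; ring
      rw [h3] at h2; linarith
    have h4 : a ≤ 2 * (a / (1 + a)) := by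
      rw [← mul_div_assoc, le_div_iff₀ h1]; nlinarith
    linarith
  · rw [min_eq_left h]
    have h2 : Real.log 2 ≤ Real.log (1 + a) := Real.log_le_log (by norm_num) (by linarith)
    linarith [Real.log_two_gt_d9]

variable {d : ℕ}

-- symmetric bilinear equality for Hermitian real matrices
lemma herm_swap {M : Matrix (Fin d) (Fin d) ℝ} (hM : M.IsHermitian) (u v : Fin d → ℝ) :
    u ⬝ᵥ M *ᵥ v = v ⬝ᵥ M *ᵥ u := by
  have hMt : Mᵀ = M := by
    ext i j; have := congrFun (congrFun hM.eq i) j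
    simpa [Matrix.conjTranspose_apply] using this
  rw [Matrix.dotProduct_mulVec, ← Matrix.mulVec_transpose, hMt, dotProduct_comm]

lemma psd_cauchy_schwarz {M : Matrix (Fin d) (Fin d) ℝ} (hM : M.PosSemidef)
    (u v : Fin d → ℝ) :
    (u ⬝ᵥ M *ᵥ v) ^ 2 ≤ (u ⬝ᵥ M *ᵥ u) * (v ⬝ᵥ M *ᵥ v) := by
  have key : ∀ t : ℝ, 0 ≤ (v ⬝ᵥ M *ᵥ v) * (t * t) + (2 * (u ⬝ᵥ M *ᵥ v)) * t + (u ⬝ᵥ M *ᵥ u) := by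
    intro t
    have h0 := hM.dotProduct_mulVec_nonneg (u + t • v)
    simp only [star_trivial] at h0
    have hexp : (u + t • v) ⬝ᵥ M *ᵥ (u + t • v)
        = (u ⬝ᵥ M *ᵥ u) + t * (u ⬝ᵥ M *ᵥ v) + t * (v ⬝ᵥ M *ᵥ u) + t^2 * (v ⬝ᵥ M *ᵥ v) := by
      rw [Matrix.mulVec_add, Matrix.mulVec_smul]
      simp only [add_dotProduct, smul_dotProduct, dotProduct_add,
        dotProduct_smul, smul_eq_mul]
      ring
    rw [hexp, herm_swap hM.1 v u] at h0
    nlinarith [h0]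
  have hd := discrim_le_zero key
  simp only [discrim] at hd
  nlinarith [hd]

lemma posdef_cs {M : Matrix (Fin d) (Fin d) ℝ} (hM : M.PosDef) (a b : Fin d → ℝ) :
    (a ⬝ᵥ b) ^ 2 ≤ (a ⬝ᵥ M⁻¹ *ᵥ a) * (b ⬝ᵥ M *ᵥ b) := by
  have hdet : IsUnit M.det := isUnit_iff_ne_zero.mpr (ne_of_gt hM.det_pos)
  have hkey : ∀ w v : Fin d → ℝ, (M⁻¹ *ᵥ w) ⬝ᵥ M *ᵥ v = w ⬝ᵥ v := by
    intro w v
    have hMt : Mᵀ = M := by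
      ext i j; have := congrFun (congrFun hM.1.eq i) j
      simpa [Matrix.conjTranspose_apply] using this
    rw [Matrix.dotProduct_mulVec, ← Matrix.mulVec_transpose, Matrix.mulVec_mulVec, hMt,
      Matrix.mul_nonsing_inv M hdet, Matrix.one_mulVec]
  calc (a ⬝ᵥ b) ^ 2 = ((M⁻¹ *ᵥ a) ⬝ᵥ M *ᵥ b) ^ 2 := by rw [hkey a b]
    _ ≤ ((M⁻¹ *ᵥ a) ⬝ᵥ M *ᵥ (M⁻¹ *ᵥ a)) * (b ⬝ᵥ M *ᵥ b) :=
        psd_cauchy_schwarz hM.posSemidef _ _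
    _ = (a ⬝ᵥ M⁻¹ *ᵥ a) * (b ⬝ᵥ M *ᵥ b) := by
        congr 1
        exact hkey a (M⁻¹ *ᵥ a)

variable {d : ℕ}

lemma trace_eq_sum_eigs {A : Matrix (Fin d) (Fin d) ℝ} (hA : A.IsHermitian) :
    A.trace = ∑ i, hA.eigenvalues i := by
  simpa using hA.trace_eq_sum_eigenvalues

lemma det_le_trace_div_pow {A : Matrix (Fin d) (Fin d) ℝ} (hd : 0 < d) (hA : A.PosSemidef) :
    A.det ≤ (A.trace / d) ^ d := by
  have hμ := hA.eigenvalues_nonneg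
  have hdet : A.det = ∏ i, hA.1.eigenvalues i := by
    have := hA.1.det_eq_prod_eigenvalues
    simpa using this
  have htr : A.trace = ∑ i, hA.1.eigenvalues i := trace_eq_sum_eigs hA.1
  set μ := hA.1.eigenvalues
  have hdR : (0:ℝ) < d := Nat.cast_pos.mpr hd
  have hamgm : ∏ i, (μ i) ^ ((d:ℝ)⁻¹) ≤ ∑ i, (d:ℝ)⁻¹ * μ i := by
    apply Real.geom_mean_le_arith_mean_weighted
    · intro i _; positivity
    · simp [Finset.card_univ]; field_simp
    · intro i _; exact hμ i
  have hsum : ∑ i, (d:ℝ)⁻¹ * μ i = A.trace / d := by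
    rw [htr, ← Finset.mul_sum]; ring
  have hL : (∏ i, (μ i) ^ ((d:ℝ)⁻¹)) ^ d = A.det := by
    rw [← Finset.prod_pow, hdet]
    congr 1; ext i
    rw [← Real.rpow_natCast ((μ i) ^ ((d:ℝ)⁻¹)) d, ← Real.rpow_mul (hμ i)]
    rw [inv_mul_cancel₀ (ne_of_gt hdR), Real.rpow_one]
  calc A.det = (∏ i, (μ i) ^ ((d:ℝ)⁻¹)) ^ d := hL.symm
    _ ≤ (∑ i, (d:ℝ)⁻¹ * μ i) ^ d := by
        apply pow_le_pow_left₀ _ hamgm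
        exact Finset.prod_nonneg fun i _ => Real.rpow_nonneg (hμ i) _
    _ = (A.trace / d) ^ d := by rw [hsum]

variable {d : ℕ}

lemma vecMulVec_posSemidef (x : Fin d → ℝ) : (Matrix.vecMulVec x x).PosSemidef := by
  refine Matrix.PosSemidef.of_dotProduct_mulVec_nonneg ?_ ?_
  · ext i j
    simp [Matrix.conjTranspose_apply, Matrix.vecMulVec_apply, mul_comm]
  · intro v
    have h : Matrix.vecMulVec x x *ᵥ v = (x ⬝ᵥ v) • x := by
      ext i
      simp only [Matrix.mulVec, Matrix.vecMulVec_apply, dotProduct, Pi.smul_apply,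
        smul_eq_mul, ← Finset.sum_mul, Finset.mul_sum]
      rw [Finset.sum_mul]
      exact Finset.sum_congr rfl fun j _ => by ring
    rw [h]
    simp only [star_trivial, dotProduct_smul, smul_eq_mul]
    rw [dotProduct_comm]
    exact mul_self_nonneg _

lemma det_rank_one_update {M : Matrix (Fin d) (Fin d) ℝ} (hM : M.PosDef) (x : Fin d → ℝ) :
    (M + Matrix.vecMulVec x x).det = M.det * (1 + x ⬝ᵥ M⁻¹ *ᵥ x) := by
  have hdet : IsUnit M.det := isUnit_iff_ne_zero.mpr (ne_of_gt hM.det_pos)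
  rw [Matrix.vecMulVec_eq Unit, Matrix.det_add_replicateCol_mul_replicateRow hdet]
  congr 1
  rw [Matrix.det_unique, Matrix.add_apply, Matrix.one_apply_eq]
  congr 1
  rw [Matrix.mul_assoc, ← Matrix.replicateCol_mulVec, Matrix.replicateRow_mul_replicateCol_apply]


variable {d : ℕ}


lemma sum_vecMulVec_posSemidef (x : ℕ → Fin d → ℝ) (s : Finset ℕ) :
    (∑ t ∈ s, Matrix.vecMulVec (x t) (x t)).PosSemidef := by
  classical
  induction s using Finset.induction_on with
  | empty => simpa using Matrix.PosSemidef.zero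
  | insert _ _ h ih => rw [Finset.sum_insert h]; exact (vecMulVec_posSemidef _).add ih

lemma vecMulVec_quad (a v : Fin d → ℝ) :
    v ⬝ᵥ Matrix.vecMulVec a a *ᵥ v = (a ⬝ᵥ v) ^ 2 := by
  have h : Matrix.vecMulVec a a *ᵥ v = (a ⬝ᵥ v) • a := by
    ext i
    simp only [Matrix.mulVec, Matrix.vecMulVec_apply, dotProduct, Pi.smul_apply,
      smul_eq_mul]
    rw [Finset.sum_mul]
    exact Finset.sum_congr rfl fun j _ => by ring
  rw [h]
  simp only [dotProduct_smul, smul_eq_mul]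
  rw [dotProduct_comm]
  ring

lemma quadform (lam : ℝ) (x : ℕ → Fin d → ℝ) (s : Finset ℕ) (v : Fin d → ℝ) :
    v ⬝ᵥ (Matrix.diagonal (fun _ => lam) + ∑ t ∈ s, Matrix.vecMulVec (x t) (x t)) *ᵥ v
      = lam * (∑ i, v i ^ 2) + ∑ t ∈ s, (x t ⬝ᵥ v) ^ 2 := by
  rw [Matrix.add_mulVec, dotProduct_add]
  congr 1
  · simp only [Matrix.mulVec_diagonal, dotProduct, Finset.mul_sum]
    exact Finset.sum_congr rfl fun i _ => by ring
  · classical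
    induction s using Finset.induction_on with
    | empty => simp
    | insert _ _ h ih =>
        rw [Finset.sum_insert h, Finset.sum_insert h, Matrix.add_mulVec,
          dotProduct_add, vecMulVec_quad, ih]

lemma traceV (lam : ℝ) (x : ℕ → Fin d → ℝ) (s : Finset ℕ) :
    (Matrix.diagonal (fun _ : Fin d => lam) + ∑ t ∈ s, Matrix.vecMulVec (x t) (x t)).trace
      = d * lam + ∑ t ∈ s, ∑ i, x t i ^ 2 := by
  rw [Matrix.trace_add, Matrix.trace_diagonal, Matrix.trace_sum]
  congr 1
  · simp [Finset.card_univ, mul_comm]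
  · refine Finset.sum_congr rfl fun t _ => ?_
    simp [Matrix.trace, Matrix.diag, Matrix.vecMulVec_apply, pow_two]

lemma min_one_mul_le (c u : ℝ) (hc : 1 ≤ c) (hu : 0 ≤ u) :
    min 1 (c * u) ≤ c * min 1 u := by
  rcases le_total u 1 with h | h
  · rw [min_eq_right h]
    exact min_le_right _ _
  · rw [min_eq_left h]
    calc min 1 (c * u) ≤ 1 := min_le_left _ _
      _ ≤ c * 1 := by linarith
lemma min_one_abs_sq (a : ℝ) : (min 1 |a|) ^ 2 = min 1 (a ^ 2) := by
  rcases le_total |a| 1 with h | h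
  · have h2 : a ^ 2 ≤ 1 := by nlinarith [abs_nonneg a, sq_abs a]
    rw [min_eq_right h, min_eq_right h2, sq_abs]
  · have h2 : (1:ℝ) ≤ a ^ 2 := by nlinarith [abs_nonneg a, sq_abs a]
    rw [min_eq_left h, min_eq_left h2, one_pow]


/-- Linear ℓ₂-Eluder bound: for `x_k, y_k ∈ ℝᵈ` with `‖x_k‖₂ ≤ R_x`,
`‖y_k‖₂ ≤ R_y`, if for every `k ∈ [K]` `∑_{t<k} ⟨x_t, y_k⟩² ≤ β`, then
`∑_{t=1}^K min{1, |⟨x_t, y_t⟩|} ≤ √(2 d K (1 + β) log(1 + (K/d) R_x² R_y²))`. -/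
theorem linear_l2_eluder
    (d K : ℕ) (hd : 0 < d)
    (x y : ℕ → Fin d → ℝ) (Rx Ry β : ℝ) (hβ : 0 ≤ β)
    (hx : ∀ k ∈ Finset.Icc 1 K, Real.sqrt (∑ i, (x k i) ^ 2) ≤ Rx)
    (hy : ∀ k ∈ Finset.Icc 1 K, Real.sqrt (∑ i, (y k i) ^ 2) ≤ Ry)
    (hpre : ∀ k ∈ Finset.Icc 1 K, ∑ t ∈ Finset.Ico 1 k, (x t ⬝ᵥ y k) ^ 2 ≤ β) :
    ∑ t ∈ Finset.Icc 1 K, min 1 |x t ⬝ᵥ y t|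
      ≤ Real.sqrt (2 * d * K * (1 + β) * Real.log (1 + ((K : ℝ) / d) * Rx ^ 2 * Ry ^ 2)) := by
  rcases Nat.eq_zero_or_pos K with hK0 | hK1
  · subst hK0
    simp only [show Finset.Icc 1 0 = (∅ : Finset ℕ) by rfl, Finset.sum_empty]
    exact Real.sqrt_nonneg _
  have h1K : 1 ∈ Finset.Icc 1 K := Finset.mem_Icc.mpr ⟨le_refl 1, hK1⟩
  have hRx0 : 0 ≤ Rx := le_trans (Real.sqrt_nonneg _) (hx 1 h1K)
  have hRy0 : 0 ≤ Ry := le_trans (Real.sqrt_nonneg _) (hy 1 h1K)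
  -- helper: norm bound squared
  have hxsq : ∀ k ∈ Finset.Icc 1 K, ∑ i, (x k i) ^ 2 ≤ Rx ^ 2 := by
    intro k hk
    have h0 : 0 ≤ ∑ i, (x k i) ^ 2 := Finset.sum_nonneg fun i _ => sq_nonneg _
    have := pow_le_pow_left₀ (Real.sqrt_nonneg _) (hx k hk) 2
    rwa [Real.sq_sqrt h0] at this
  have hysq : ∀ k ∈ Finset.Icc 1 K, ∑ i, (y k i) ^ 2 ≤ Ry ^ 2 := by
    intro k hk
    have h0 : 0 ≤ ∑ i, (y k i) ^ 2 := Finset.sum_nonneg fun i _ => sq_nonneg _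
    have := pow_le_pow_left₀ (Real.sqrt_nonneg _) (hy k hk) 2
    rwa [Real.sq_sqrt h0] at this
  by_cases hdeg : Rx = 0 ∨ Ry = 0
  · have hzero : ∀ t ∈ Finset.Icc 1 K, x t ⬝ᵥ y t = 0 := by
      intro t ht
      rcases hdeg with h | h
      · have h1 : ∑ i, (x t i) ^ 2 ≤ 0 := by have := hxsq t ht; rw [h] at this; linarith
        have hx0 : x t = 0 := by
          funext i
          have h2 : (x t i) ^ 2 ≤ 0 := le_trans
            (Finset.single_le_sum (f := fun i => (x t i) ^ 2)
              (fun i _ => sq_nonneg _) (Finset.mem_univ i)) h1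
          have h3 : (x t i) ^ 2 = 0 := le_antisymm h2 (sq_nonneg _)
          exact pow_eq_zero_iff (two_ne_zero) |>.mp h3
        rw [hx0]; simp [zero_dotProduct]
      · have h1 : ∑ i, (y t i) ^ 2 ≤ 0 := by have := hysq t ht; rw [h] at this; linarith
        have hy0 : y t = 0 := by
          funext i
          have h2 : (y t i) ^ 2 ≤ 0 := le_trans
            (Finset.single_le_sum (f := fun i => (y t i) ^ 2)
              (fun i _ => sq_nonneg _) (Finset.mem_univ i)) h1
          have h3 : (y t i) ^ 2 = 0 := le_antisymm h2 (sq_nonneg _)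
          exact pow_eq_zero_iff (two_ne_zero) |>.mp h3
        rw [hy0]; simp [dotProduct_zero]
    have : ∑ t ∈ Finset.Icc 1 K, min 1 |x t ⬝ᵥ y t| = 0 :=
      Finset.sum_eq_zero fun t ht => by rw [hzero t ht]; simp
    rw [this]; exact Real.sqrt_nonneg _
  push_neg at hdeg
  obtain ⟨hRxne, hRyne⟩ := hdeg
  have hRx : 0 < Rx := lt_of_le_of_ne hRx0 (Ne.symm hRxne)
  have hRy : 0 < Ry := lt_of_le_of_ne hRy0 (Ne.symm hRyne)
  set lam : ℝ := 1 / Ry ^ 2 with hlam_def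
  have hlam : 0 < lam := by positivity
  set V : ℕ → Matrix (Fin d) (Fin d) ℝ := fun k =>
    Matrix.diagonal (fun _ => lam) + ∑ t ∈ Finset.Icc 1 k, Matrix.vecMulVec (x t) (x t) with hV
  have hVk : ∀ k, V k = Matrix.diagonal (fun _ => lam)
      + ∑ t ∈ Finset.Icc 1 k, Matrix.vecMulVec (x t) (x t) := fun k => rfl
  have hVpd : ∀ k, (V k).PosDef := fun k =>
    (Matrix.posDef_diagonal_iff.mpr fun _ => hlam).add_posSemidef
      (sum_vecMulVec_posSemidef x _)
  have hdetpos : ∀ k, 0 < (V k).det := fun k => (hVpd k).det_pos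
  set u : ℕ → ℝ := fun k => x k ⬝ᵥ (V (k - 1))⁻¹ *ᵥ x k with hu
  have hu0 : ∀ k, 0 ≤ u k := by
    intro k
    have := ((hVpd (k - 1)).posSemidef.inv).dotProduct_mulVec_nonneg (x k)
    simpa using this
  set L : ℝ := Real.log (1 + ((K : ℝ) / d) * Rx ^ 2 * Ry ^ 2) with hL
  have hdR : (0 : ℝ) < d := Nat.cast_pos.mpr hd
  have hstep : ∀ i : ℕ, V (i + 1) = V i + Matrix.vecMulVec (x (i + 1)) (x (i + 1)) := by
    intro i
    rw [hVk, hVk, Finset.sum_Icc_succ_top (Nat.succ_le_succ (Nat.zero_le i)), add_assoc]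
  have hdetstep : ∀ i : ℕ, (V (i + 1)).det = (V i).det * (1 + u (i + 1)) := by
    intro i
    rw [hstep i, det_rank_one_update (hVpd i)]
    rfl
  have hlogstep : ∀ i : ℕ,
      Real.log (V (i + 1)).det - Real.log (V i).det = Real.log (1 + u (i + 1)) := by
    intro i
    rw [hdetstep i, Real.log_mul (ne_of_gt (hdetpos i))
      (ne_of_gt (by linarith [hu0 (i + 1)] : (0:ℝ) < 1 + u (i + 1)))]
    ring
  have hsum_min : ∑ i ∈ Finset.range K, min 1 (u (i + 1))
      ≤ 2 * (Real.log (V K).det - Real.log (V 0).det) := by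
    have htel : ∑ i ∈ Finset.range K,
        (Real.log (V (i + 1)).det - Real.log (V i).det)
        = Real.log (V K).det - Real.log (V 0).det :=
      Finset.sum_range_sub (fun k => Real.log (V k).det) K
    calc ∑ i ∈ Finset.range K, min 1 (u (i + 1))
        ≤ ∑ i ∈ Finset.range K, 2 * Real.log (1 + u (i + 1)) :=
          Finset.sum_le_sum fun i _ => min_le_two_log _ (hu0 _)
      _ = 2 * ∑ i ∈ Finset.range K,
            (Real.log (V (i + 1)).det - Real.log (V i).det) := by
          rw [Finset.mul_sum]
          exact Finset.sum_congr rfl fun i _ => by rw [hlogstep i]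
      _ = 2 * (Real.log (V K).det - Real.log (V 0).det) := by rw [htel]
  have hV0det : (V 0).det = lam ^ d := by
    rw [hVk]
    simp [Matrix.det_diagonal, Finset.prod_const, Finset.card_univ]
  have htrace : (V K).trace ≤ d * lam + K * Rx ^ 2 := by
    rw [hVk, traceV]
    have : ∑ t ∈ Finset.Icc 1 K, ∑ i, (x t i) ^ 2 ≤ ∑ t ∈ Finset.Icc 1 K, Rx ^ 2 :=
      Finset.sum_le_sum hxsq
    rw [Finset.sum_const, Nat.card_Icc] at this
    simp only [Nat.add_sub_cancel, nsmul_eq_mul] at this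
    linarith
  have htrpos : 0 < (V K).trace := by
    rw [hVk, traceV]
    have h1 : 0 ≤ ∑ t ∈ Finset.Icc 1 K, ∑ i, (x t i) ^ 2 :=
      Finset.sum_nonneg fun t _ => Finset.sum_nonneg fun i _ => sq_nonneg _
    nlinarith
  have hB : (0:ℝ) < d * lam + K * Rx ^ 2 := lt_of_lt_of_le htrpos htrace
  have hlogVK : Real.log (V K).det ≤ d * Real.log ((d * lam + K * Rx ^ 2) / d) := by
    have h1 : (V K).det ≤ ((V K).trace / d) ^ d :=
      det_le_trace_div_pow hd (hVpd K).posSemidef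
    have h2 : ((V K).trace / d) ^ d ≤ ((d * lam + K * Rx ^ 2) / d) ^ d := by
      apply pow_le_pow_left₀ (le_of_lt (div_pos htrpos hdR))
      exact (div_le_div_iff_of_pos_right hdR).mpr htrace
    calc Real.log (V K).det ≤ Real.log (((d * lam + K * Rx ^ 2) / d) ^ d) :=
          Real.log_le_log (hdetpos K) (le_trans h1 h2)
      _ = d * Real.log ((d * lam + K * Rx ^ 2) / d) := Real.log_pow _ d
  have hgap : Real.log (V K).det - Real.log (V 0).det ≤ (d : ℝ) * L := by
    rw [hV0det, Real.log_pow]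
    have hdiv : Real.log ((d * lam + K * Rx ^ 2) / d) - Real.log lam = L := by
      rw [← Real.log_div (ne_of_gt (by positivity)) (ne_of_gt hlam), hL]
      congr 1
      rw [hlam_def]
      field_simp
    have h3 : (d : ℝ) * Real.log ((d * lam + K * Rx ^ 2) / d) - d * Real.log lam
        = d * L := by rw [← hdiv]; ring
    linarith [hlogVK]
  have hy2 : ∀ k ∈ Finset.Icc 1 K, y k ⬝ᵥ V (k - 1) *ᵥ y k ≤ 1 + β := by
    intro k hk
    obtain ⟨hk1, hkK⟩ := Finset.mem_Icc.mp hk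
    have hIcc : Finset.Icc 1 (k - 1) = Finset.Ico 1 k := by
      rw [← Finset.Ico_add_one_right_eq_Icc]
      congr 1
      omega
    rw [hVk, quadform, hIcc]
    have h1 : lam * ∑ i, (y k i) ^ 2 ≤ lam * Ry ^ 2 :=
      mul_le_mul_of_nonneg_left (hysq k hk) (le_of_lt hlam)
    have h2 : lam * Ry ^ 2 = 1 := by
      rw [hlam_def]; field_simp
    have h3 := hpre k hk
    linarith
  have hmin : ∀ k ∈ Finset.Icc 1 K,
      min 1 ((x k ⬝ᵥ y k) ^ 2) ≤ (1 + β) * min 1 (u k) := by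
    intro k hk
    have hcs := posdef_cs (hVpd (k - 1)) (x k) (y k)
    have h2 : (x k ⬝ᵥ y k) ^ 2 ≤ (1 + β) * u k := by
      calc (x k ⬝ᵥ y k) ^ 2 ≤ u k * (y k ⬝ᵥ V (k - 1) *ᵥ y k) := hcs
        _ ≤ u k * (1 + β) := mul_le_mul_of_nonneg_left (hy2 k hk) (hu0 k)
        _ = (1 + β) * u k := mul_comm _ _
    calc min 1 ((x k ⬝ᵥ y k) ^ 2) ≤ min 1 ((1 + β) * u k) :=
          min_le_min (le_refl 1) h2
      _ ≤ (1 + β) * min 1 (u k) := min_one_mul_le _ _ (by linarith) (hu0 k)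
  have hS0 : 0 ≤ ∑ t ∈ Finset.Icc 1 K, min 1 |x t ⬝ᵥ y t| :=
    Finset.sum_nonneg fun t _ => le_min zero_le_one (abs_nonneg _)
  have hL0 : 0 ≤ L := by
    rw [hL]
    apply Real.log_nonneg
    have : 0 ≤ ((K : ℝ) / d) * Rx ^ 2 * Ry ^ 2 := by positivity
    linarith
  have hcard : (Finset.Icc 1 K).card = K := by rw [Nat.card_Icc]; omega
  have hreindex : ∑ t ∈ Finset.Icc 1 K, min 1 (u t)
      = ∑ i ∈ Finset.range K, min 1 (u (i + 1)) := by
    rw [← Finset.Ico_add_one_right_eq_Icc, Finset.sum_Ico_eq_sum_range]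
    exact Finset.sum_congr (by norm_num) fun i _ => by rw [Nat.add_comm]
  have hsq : (∑ t ∈ Finset.Icc 1 K, min 1 |x t ⬝ᵥ y t|) ^ 2
      ≤ 2 * d * K * (1 + β) * L := by
    calc (∑ t ∈ Finset.Icc 1 K, min 1 |x t ⬝ᵥ y t|) ^ 2
        ≤ (Finset.Icc 1 K).card * ∑ t ∈ Finset.Icc 1 K, (min 1 |x t ⬝ᵥ y t|) ^ 2 :=
          sq_sum_le_card_mul_sum_sq
      _ = K * ∑ t ∈ Finset.Icc 1 K, min 1 ((x t ⬝ᵥ y t) ^ 2) := by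
          rw [hcard]
          congr 1
          exact Finset.sum_congr rfl fun t _ => min_one_abs_sq _
      _ ≤ K * ∑ t ∈ Finset.Icc 1 K, (1 + β) * min 1 (u t) :=
          mul_le_mul_of_nonneg_left (Finset.sum_le_sum hmin) (by positivity)
      _ = (K * (1 + β)) * ∑ i ∈ Finset.range K, min 1 (u (i + 1)) := by
          rw [← Finset.mul_sum, hreindex]; ring
      _ ≤ (K * (1 + β)) * (2 * (Real.log (V K).det - Real.log (V 0).det)) :=
          mul_le_mul_of_nonneg_left hsum_min (by positivity)
      _ ≤ (K * (1 + β)) * (2 * (d * L)) := by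
          apply mul_le_mul_of_nonneg_left _ (by positivity)
          linarith [hgap]
      _ = 2 * d * K * (1 + β) * L := by ring
  calc ∑ t ∈ Finset.Icc 1 K, min 1 |x t ⬝ᵥ y t|
      = Real.sqrt ((∑ t ∈ Finset.Icc 1 K, min 1 |x t ⬝ᵥ y t|) ^ 2) :=
        (Real.sqrt_sq hS0).symm
    _ ≤ Real.sqrt (2 * d * K * (1 + β) * Real.log (1 + ((K : ℝ) / d) * Rx ^ 2 * Ry ^ 2)) := by
        apply Real.sqrt_le_sqrt
        rw [← hL]
        exact hsq
end
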